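/- arXiv:1809.10767 — 5 statements merged into one kernel-verified Lean document; each statement's English description precedes it below -/
import Mathlib

section
/- Let G be a connected graph on n vertices. Then SW_3(G) ≥ ((n-2)/2) · W(G), with equality if and only if G is a modular graph. -/
/-- The Steiner distance of a set `S` of vertices of `G`: the minimum number of edges
of a connected subgraph of `G` containing all vertices of `S`. -/
noncomputable def steinerDist {V : Type*} (G : SimpleGraph V) (S : Set V) : ℕ :=
  sInf {n | ∃ H : G.Subgraph, H.Connected ∧ S ⊆ H.verts ∧ H.edgeSet.ncard = n}
/-- The Wiener index of `G`: the sum of distances over all unordered pairs of vertices. -/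
noncomputable def wienerIndex {V : Type*} (G : SimpleGraph V) [Fintype V] : ℕ :=
  ∑ p ∈ (Finset.univ : Finset V).sym2,
    Sym2.lift ⟨fun u v => G.dist u v, fun _ _ => SimpleGraph.dist_comm⟩ p
/-- The Steiner `k`-Wiener index of `G`: the sum of the Steiner distances of all
`k`-element subsets of vertices of `G`. -/
noncomputable def steinerWiener {V : Type*} (G : SimpleGraph V) [Fintype V] (k : ℕ) : ℕ :=
  ∑ S ∈ (Finset.univ : Finset V).powersetCard k, steinerDist G (S : Set V)
/-- The interval `I(u,v)`: the set of all vertices lying on shortest `u,v`-paths. -/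
def interval {V : Type*} (G : SimpleGraph V) (u v : V) : Set V :=
  {x | G.dist u x + G.dist x v = G.dist u v}
/-- A graph `G` is modular if for every three vertices `x, y, z` some vertex lies
simultaneously on shortest paths between every two of them. -/
def IsModular {V : Type*} (G : SimpleGraph V) : Prop :=
  ∀ x y z : V, (interval G x y ∩ interval G x z ∩ interval G y z).Nonempty

open SimpleGraph


lemma exists_firsthit {W : Type*} {G : SimpleGraph W} (P : W → Prop) [DecidablePred P] :
    ∀ {a b : W} (q : G.Walk a b), P b →
    ∃ (x : W) (r : G.Walk a x), P x ∧ (∀ y ∈ r.support, P y → y = x) ∧ List.Sublist r.edges q.edges := by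
  intro a b q hb
  induction q with
  | nil =>
    exact ⟨_, Walk.nil, hb, by simp +contextual, by simp⟩
  | @cons a c b h q ih =>
    by_cases ha : P a
    · exact ⟨a, Walk.nil, ha, by simp +contextual, List.nil_sublist _⟩
    · obtain ⟨x, r, hx, hfirst, hsub⟩ := ih hb
      refine ⟨x, Walk.cons h r, hx, ?_, ?_⟩
      · intro y hy hPy
        rw [Walk.support_cons, List.mem_cons] at hy
        rcases hy with rfl | hy
        · exact absurd hPy ha
        · exact hfirst y hy hPy
      · rw [Walk.edges_cons, Walk.edges_cons]
        exact hsub.cons₂ _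

lemma exists_center {W : Type*} [Finite W] {G : SimpleGraph W} (hc : G.Connected)
    (u v w : W) :
    ∃ (x : W) (p1 : G.Walk u x) (p2 : G.Walk x v) (r : G.Walk w x),
      p1.length + p2.length + r.length ≤ G.edgeSet.ncard := by
  classical
  obtain ⟨p, hp, -⟩ := (hc.preconnected u v).exists_path_of_dist
  obtain ⟨q, hq, -⟩ := (hc.preconnected w u).exists_path_of_dist
  obtain ⟨x, r, hxp, hfirst, hsub⟩ :=
    exists_firsthit (· ∈ p.support) q p.start_mem_support
  -- r.edges disjoint from p.edges
  have hdisj : ∀ e ∈ r.edges, e ∉ p.edges := by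
    intro e her hep
    induction e with
    | h y z =>
      have hyz : y ≠ z := (Walk.adj_of_mem_edges p hep).ne
      have hy : y = x := hfirst y (Walk.fst_mem_support_of_mem_edges r her)
        (Walk.fst_mem_support_of_mem_edges p hep)
      have hz : z = x := hfirst z (Walk.snd_mem_support_of_mem_edges r her)
        (Walk.snd_mem_support_of_mem_edges p hep)
      exact hyz (hy.trans hz.symm)
  have hrnodup : r.edges.Nodup := hsub.nodup hq.edges_nodup
  have hnodup : (p.edges ++ r.edges).Nodup := by
    rw [List.nodup_append]
    exact ⟨hp.edges_nodup, hrnodup, fun e he e' he' h => hdisj e' he' (h ▸ he)⟩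
  have hlen : (p.edges ++ r.edges).length ≤ G.edgeSet.ncard := by
    have h1 : ((p.edges ++ r.edges).toFinset : Set (Sym2 W)) ⊆ G.edgeSet := by
      intro e he
      simp only [Finset.coe_sort_coe, List.coe_toFinset, Set.mem_setOf_eq, List.mem_append] at he ⊢
      rcases he with h | h
      · exact p.edges_subset_edgeSet h
      · exact r.edges_subset_edgeSet h
    calc (p.edges ++ r.edges).length = (p.edges ++ r.edges).toFinset.card :=
          (List.toFinset_card_of_nodup hnodup).symm
      _ = ((p.edges ++ r.edges).toFinset : Set (Sym2 W)).ncard := (Set.ncard_coe_finset _).symm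
      _ ≤ G.edgeSet.ncard := Set.ncard_le_ncard h1 (Set.toFinite _)
  refine ⟨x, p.takeUntil x hxp, p.dropUntil x hxp, r, ?_⟩
  have hsplit : (p.takeUntil x hxp).length + (p.dropUntil x hxp).length = p.length := by
    have := congrArg Walk.length (p.take_spec hxp)
    rwa [Walk.length_append] at this
  have : p.length + r.length ≤ G.edgeSet.ncard := by
    simpa [Walk.length_edges] using hlen
  omega

lemma exists_center_subgraph {V : Type*} [Finite V] {G : SimpleGraph V} {H : G.Subgraph}
    (hH : H.Connected) {u v w : V} (hu : u ∈ H.verts) (hv : v ∈ H.verts) (hw : w ∈ H.verts) :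
    ∃ x : V, G.dist u x + G.dist v x + G.dist w x ≤ H.edgeSet.ncard := by
  classical
  obtain ⟨x, p1, p2, r, hlen⟩ := exists_center hH.coe ⟨u, hu⟩ ⟨v, hv⟩ ⟨w, hw⟩
  have hcard : H.coe.edgeSet.ncard = H.edgeSet.ncard := by
    rw [← H.image_coe_edgeSet_coe]
    exact (Set.ncard_image_of_injective _ (Sym2.map.injective Subtype.val_injective)).symm
  refine ⟨(x : V), ?_⟩
  have h1 : G.dist u (x : V) ≤ p1.length := by
    have := G.dist_le (p1.map H.hom)
    exact this.trans_eq (by rw [Walk.length_map])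
  have h2 : G.dist v (x : V) ≤ p2.length := by
    have := G.dist_le ((p2.map H.hom).reverse)
    exact this.trans_eq (by rw [Walk.length_reverse, Walk.length_map])
  have h3 : G.dist w (x : V) ≤ r.length := by
    have := G.dist_le (r.map H.hom)
    exact this.trans_eq (by rw [Walk.length_map])
  omega

lemma steinerDist_le {V : Type*} {G : SimpleGraph V} {S : Set V} {H : G.Subgraph}
    (hH : H.Connected) (hS : S ⊆ H.verts) : steinerDist G S ≤ H.edgeSet.ncard :=
  Nat.sInf_le ⟨H, hH, hS, rfl⟩

lemma top_subgraph_connected {V : Type*} {G : SimpleGraph V} (hG : G.Connected) :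
    (⊤ : G.Subgraph).Connected :=
  SimpleGraph.Subgraph.connected_iff'.mpr
    ((SimpleGraph.Subgraph.topIso (G := G)).connected_iff.mpr hG)

lemma exists_steiner_opt {V : Type*} {G : SimpleGraph V} (hG : G.Connected) (S : Set V) :
    ∃ H : G.Subgraph, H.Connected ∧ S ⊆ H.verts ∧ H.edgeSet.ncard = steinerDist G S := by
  have hne : {n | ∃ H : G.Subgraph, H.Connected ∧ S ⊆ H.verts ∧ H.edgeSet.ncard = n}.Nonempty :=
    ⟨_, ⊤, top_subgraph_connected hG, by simp, rfl⟩
  exact Nat.sInf_mem hne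

lemma center_le_steiner {V : Type*} [Finite V] {G : SimpleGraph V} (hG : G.Connected)
    (u v w : V) :
    ∃ x : V, G.dist u x + G.dist v x + G.dist w x ≤ steinerDist G ({u, v, w} : Set V) := by
  obtain ⟨H, hH, hS, hcard⟩ := exists_steiner_opt hG ({u, v, w} : Set V)
  obtain ⟨x, hx⟩ := exists_center_subgraph hH
    (hS (show u ∈ ({u, v, w} : Set V) by simp))
    (hS (show v ∈ ({u, v, w} : Set V) by simp))
    (hS (show w ∈ ({u, v, w} : Set V) by simp))
  exact ⟨x, hcard ▸ hx⟩

lemma two_sd_ge {V : Type*} [Finite V] {G : SimpleGraph V} (hG : G.Connected) (u v w : V) :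
    G.dist u v + G.dist v w + G.dist u w ≤ 2 * steinerDist G ({u, v, w} : Set V) := by
  obtain ⟨x, hx⟩ := center_le_steiner hG u v w
  have t1 : G.dist u v ≤ G.dist u x + G.dist x v := hG.dist_triangle
  have t2 : G.dist v w ≤ G.dist v x + G.dist x w := hG.dist_triangle
  have t3 : G.dist u w ≤ G.dist u x + G.dist x w := hG.dist_triangle
  have c1 : G.dist x v = G.dist v x := SimpleGraph.dist_comm
  have c2 : G.dist x w = G.dist w x := SimpleGraph.dist_comm
  omega

lemma median_of_eq {V : Type*} [Finite V] {G : SimpleGraph V} (hG : G.Connected) {u v w : V}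
    (h : 2 * steinerDist G ({u, v, w} : Set V) = G.dist u v + G.dist v w + G.dist u w) :
    (interval G u v ∩ interval G u w ∩ interval G v w).Nonempty := by
  obtain ⟨x, hx⟩ := center_le_steiner hG u v w
  have t1 : G.dist u v ≤ G.dist u x + G.dist x v := hG.dist_triangle
  have t2 : G.dist v w ≤ G.dist v x + G.dist x w := hG.dist_triangle
  have t3 : G.dist u w ≤ G.dist u x + G.dist x w := hG.dist_triangle
  have c1 : G.dist x v = G.dist v x := SimpleGraph.dist_comm
  have c2 : G.dist x w = G.dist w x := SimpleGraph.dist_comm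
  refine ⟨x, ⟨?_, ?_⟩, ?_⟩ <;> · simp only [interval, Set.mem_setOf_eq]; omega

lemma walk_toSubgraph_ncard_le {V : Type*} [Finite V] {G : SimpleGraph V} {a b : V}
    (p : G.Walk a b) : p.toSubgraph.edgeSet.ncard ≤ p.length := by
  classical
  cases nonempty_fintype V
  calc p.toSubgraph.edgeSet.ncard = (p.edges.toFinset : Set (Sym2 V)).ncard := by
        congr 1
        rw [Walk.edgeSet_toSubgraph]
        ext e; simp
    _ = p.edges.toFinset.card := Set.ncard_coe_finset _
    _ ≤ p.edges.length := List.toFinset_card_le _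
    _ = p.length := p.length_edges

lemma sd_le_sum {V : Type*} [Finite V] {G : SimpleGraph V} (hG : G.Connected) (u v w x : V) :
    steinerDist G ({u, v, w} : Set V) ≤ G.dist u x + G.dist v x + G.dist w x := by
  classical
  obtain ⟨pu, hpu⟩ := (hG.preconnected u x).exists_walk_length_eq_dist
  obtain ⟨pv, hpv⟩ := (hG.preconnected v x).exists_walk_length_eq_dist
  obtain ⟨pw, hpw⟩ := (hG.preconnected w x).exists_walk_length_eq_dist
  set H : G.Subgraph := pu.toSubgraph ⊔ pv.toSubgraph ⊔ pw.toSubgraph with hH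
  have hconn : H.Connected := by
    refine SimpleGraph.Subgraph.connected_sup
      (SimpleGraph.Subgraph.connected_sup pu.toSubgraph_connected.preconnected pv.toSubgraph_connected.preconnected
        ⟨x, pu.end_mem_verts_toSubgraph, pv.end_mem_verts_toSubgraph⟩).preconnected
      pw.toSubgraph_connected.preconnected ⟨x, Or.inl pu.end_mem_verts_toSubgraph,
        pw.end_mem_verts_toSubgraph⟩
  have hS : ({u, v, w} : Set V) ⊆ H.verts := by
    intro y hy
    rcases hy with rfl | rfl | rfl
    · exact Or.inl (Or.inl pu.start_mem_verts_toSubgraph)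
    · exact Or.inl (Or.inr pv.start_mem_verts_toSubgraph)
    · exact Or.inr pw.start_mem_verts_toSubgraph
  have hcard : H.edgeSet.ncard ≤ G.dist u x + G.dist v x + G.dist w x := by
    have : H.edgeSet = pu.toSubgraph.edgeSet ∪ pv.toSubgraph.edgeSet ∪ pw.toSubgraph.edgeSet := by
      rw [hH, SimpleGraph.Subgraph.edgeSet_sup, SimpleGraph.Subgraph.edgeSet_sup]
    rw [this]
    calc (pu.toSubgraph.edgeSet ∪ pv.toSubgraph.edgeSet ∪ pw.toSubgraph.edgeSet).ncard
        ≤ (pu.toSubgraph.edgeSet ∪ pv.toSubgraph.edgeSet).ncard + pw.toSubgraph.edgeSet.ncard :=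
          Set.ncard_union_le _ _
      _ ≤ pu.toSubgraph.edgeSet.ncard + pv.toSubgraph.edgeSet.ncard
            + pw.toSubgraph.edgeSet.ncard := by
          have := Set.ncard_union_le pu.toSubgraph.edgeSet pv.toSubgraph.edgeSet
          omega
      _ ≤ G.dist u x + G.dist v x + G.dist w x := by
          have h1 := walk_toSubgraph_ncard_le pu
          have h2 := walk_toSubgraph_ncard_le pv
          have h3 := walk_toSubgraph_ncard_le pw
          omega
  exact le_trans (steinerDist_le hconn hS) hcard

lemma two_sd_eq_of_modular {V : Type*} [Finite V] {G : SimpleGraph V} (hG : G.Connected)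
    (hm : IsModular G) (u v w : V) :
    2 * steinerDist G ({u, v, w} : Set V) = G.dist u v + G.dist v w + G.dist u w := by
  obtain ⟨x, ⟨h1, h2⟩, h3⟩ := hm u v w
  simp only [interval, Set.mem_setOf_eq] at h1 h2 h3
  have hle := sd_le_sum hG u v w x
  have hge := two_sd_ge hG u v w
  have c1 : G.dist x v = G.dist v x := SimpleGraph.dist_comm
  have c2 : G.dist x w = G.dist w x := SimpleGraph.dist_comm
  have c3 : G.dist x u = G.dist u x := SimpleGraph.dist_comm
  omega

lemma modular_degenerate {V : Type*} (G : SimpleGraph V) {x y z : V}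
    (h : x = y ∨ x = z ∨ y = z) :
    (interval G x y ∩ interval G x z ∩ interval G y z).Nonempty := by
  have hm : ∀ a b : V, a ∈ interval G a b := fun a b => by
    simp [interval, SimpleGraph.dist_self]
  have hm' : ∀ a b : V, b ∈ interval G a b := fun a b => by
    simp [interval, SimpleGraph.dist_self]
  rcases h with rfl | rfl | rfl
  · exact ⟨x, ⟨hm x x, hm x z⟩, hm x z⟩
  · exact ⟨x, ⟨hm x y, hm x x⟩, hm' y x⟩
  · exact ⟨y, ⟨hm' x y, hm' x y⟩, hm y y⟩

noncomputable def dsym {V : Type*} (G : SimpleGraph V) : Sym2 V → ℕ :=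
  Sym2.lift ⟨fun u v => G.dist u v, fun _ _ => SimpleGraph.dist_comm⟩

@[simp] lemma dsym_mk {V : Type*} (G : SimpleGraph V) (a b : V) :
    dsym G s(a, b) = G.dist a b := rfl

lemma two_mul_sum_sym2 {V : Type*} [DecidableEq V]
    (f : Sym2 V → ℕ) (hf : ∀ a, f (Sym2.diag a) = 0) (S : Finset V) :
    2 * ∑ p ∈ S.sym2, f p = ∑ a ∈ S, ∑ b ∈ S, f s(a, b) := by
  induction S using Finset.cons_induction with
  | empty => simp
  | cons a s ha ih =>
    have hfa : f s(a, a) = 0 := hf a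
    have h1 : ∑ p ∈ (Finset.cons a s ha).sym2, f p
        = ∑ b ∈ s, f s(a, b) + ∑ p ∈ s.sym2, f p := by
      rw [Finset.sym2_cons, Finset.sum_disjUnion, Finset.sum_map]
      simp only [Sym2.mkEmbedding_apply, Finset.sum_cons, hfa, zero_add]
    have h2 : ∑ x ∈ Finset.cons a s ha, ∑ b ∈ Finset.cons a s ha, f s(x, b)
        = ∑ b ∈ s, f s(a, b) + (∑ x ∈ s, f s(x, a) + ∑ x ∈ s, ∑ b ∈ s, f s(x, b)) := by
      simp only [Finset.sum_cons, hfa, zero_add, Finset.sum_add_distrib]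
      omega
    have h3 : ∑ x ∈ s, f s(x, a) = ∑ b ∈ s, f s(a, b) :=
      Finset.sum_congr rfl fun b _ => by rw [Sym2.eq_swap]
    rw [h1, h2, h3, Nat.mul_add, ih]
    omega

lemma pairsum_triple {V : Type*} [DecidableEq V] (G : SimpleGraph V) {u v w : V}
    (huv : u ≠ v) (huw : u ≠ w) (hvw : v ≠ w) :
    ∑ p ∈ ({u, v, w} : Finset V).sym2, dsym G p
      = G.dist u v + G.dist v w + G.dist u w := by
  have h := two_mul_sum_sym2 (dsym G) (fun a => by
    simp [Sym2.diag, SimpleGraph.dist_self]) ({u, v, w} : Finset V)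
  have hu : u ∉ ({v, w} : Finset V) := by simp [huv, huw]
  have hv2 : v ∉ ({w} : Finset V) := by simp [hvw]
  have hexp : ∑ a ∈ ({u, v, w} : Finset V), ∑ b ∈ ({u, v, w} : Finset V), dsym G s(a, b)
      = 2 * (G.dist u v + G.dist v w + G.dist u w) := by
    simp only [Finset.sum_insert hu, Finset.sum_insert hv2, Finset.sum_singleton, dsym_mk,
      SimpleGraph.dist_self]
    have c1 : G.dist v u = G.dist u v := SimpleGraph.dist_comm
    have c2 : G.dist w u = G.dist u w := SimpleGraph.dist_comm
    have c3 : G.dist w v = G.dist v w := SimpleGraph.dist_comm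
    omega
  omega

lemma count_sets {V : Type*} [DecidableEq V] [Fintype V] {a b : V} (hab : a ≠ b) :
    ((Finset.univ.powersetCard 3).filter fun S : Finset V => a ∈ S ∧ b ∈ S).card
      = Fintype.card V - 2 := by
  have hab2 : ({a, b} : Finset V).card = 2 := by
    rw [Finset.card_insert_of_notMem (by simp [hab]), Finset.card_singleton]
  have key : ((Finset.univ.powersetCard 3).filter fun S : Finset V => a ∈ S ∧ b ∈ S).card
      = ((Finset.univ \ {a, b} : Finset V).powersetCard 1).card := by
    apply Finset.card_bij' (fun S _ => S \ ({a, b} : Finset V))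
      (fun T _ => T ∪ ({a, b} : Finset V))
    · intro S hS
      simp only [Finset.mem_filter, Finset.mem_powersetCard] at hS
      obtain ⟨⟨-, hcard⟩, haS, hbS⟩ := hS
      have hsub : ({a, b} : Finset V) ⊆ S := by
        intro y hy; rcases Finset.mem_insert.mp hy with rfl | hy
        · exact haS
        · rw [Finset.mem_singleton.mp hy]; exact hbS
      rw [Finset.mem_powersetCard]
      constructor
      · exact Finset.sdiff_subset_sdiff (Finset.subset_univ S) le_rfl
      · rw [Finset.card_sdiff_of_subset hsub, hcard, hab2]
    · intro T hT
      rw [Finset.mem_powersetCard] at hT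
      obtain ⟨hTsub, hTcard⟩ := hT
      have hdisj : Disjoint T ({a, b} : Finset V) := by
        refine Finset.disjoint_left.mpr fun y hy hy2 => ?_
        have := hTsub hy
        rw [Finset.mem_sdiff] at this
        exact this.2 hy2
      simp only [Finset.mem_filter, Finset.mem_powersetCard]
      refine ⟨⟨Finset.subset_univ _, ?_⟩, ?_, ?_⟩
      · rw [Finset.card_union_of_disjoint hdisj, hTcard, hab2]
      · exact Finset.mem_union_right _ (by simp)
      · exact Finset.mem_union_right _ (by simp)
    · intro S hS
      simp only [Finset.mem_filter, Finset.mem_powersetCard] at hS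
      obtain ⟨⟨-, hcard⟩, haS, hbS⟩ := hS
      apply Finset.sdiff_union_of_subset
      intro y hy; rcases Finset.mem_insert.mp hy with rfl | hy
      · exact haS
      · rw [Finset.mem_singleton.mp hy]; exact hbS
    · intro T hT
      rw [Finset.mem_powersetCard] at hT
      refine Finset.union_sdiff_cancel_right ?_
      refine Finset.disjoint_left.mpr fun y hy hy2 => ?_
      have := hT.1 hy
      rw [Finset.mem_sdiff] at this
      exact this.2 hy2
  rw [key, Finset.card_powersetCard, Nat.choose_one_right,
    Finset.card_sdiff_of_subset (Finset.subset_univ _), hab2, Finset.card_univ]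

lemma double_count {V : Type*} [DecidableEq V] [Fintype V] (G : SimpleGraph V) :
    ∑ S ∈ Finset.univ.powersetCard 3, ∑ p ∈ (S : Finset V).sym2, dsym G p
      = (Fintype.card V - 2) * ∑ p ∈ (Finset.univ : Finset V).sym2, dsym G p := by
  have step1 : ∀ S ∈ Finset.univ.powersetCard 3,
      ∑ p ∈ (S : Finset V).sym2, dsym G p
        = ∑ p ∈ (Finset.univ : Finset V).sym2, if p ∈ (S : Finset V).sym2 then dsym G p else 0 := by
    intro S _
    rw [Finset.sum_ite_mem, Finset.inter_eq_right.mpr (Finset.sym2_mono (Finset.subset_univ S))]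
  rw [Finset.sum_congr rfl step1, Finset.sum_comm]
  rw [Finset.mul_sum]
  refine Finset.sum_congr rfl fun p _ => ?_
  induction p with
  | h x y =>
    rw [← Finset.sum_filter, Finset.sum_const, smul_eq_mul]
    by_cases hxy : x = y
    · subst hxy
      simp [SimpleGraph.dist_self]
    · have : ((Finset.univ.powersetCard 3).filter fun S : Finset V => s(x, y) ∈ S.sym2)
          = (Finset.univ.powersetCard 3).filter fun S : Finset V => x ∈ S ∧ y ∈ S := by
        apply Finset.filter_congr
        intro S _
        simp [Finset.mk_mem_sym2_iff]
      rw [this, count_sets hxy]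

lemma coe_triple {V : Type*} [DecidableEq V] (x y z : V) :
    ((({x, y, z} : Finset V) : Set V)) = ({x, y, z} : Set V) := by
  simp

lemma T_le {V : Type*} [DecidableEq V] [Fintype V] {G : SimpleGraph V} (hG : G.Connected)
    {S : Finset V} (hS : S ∈ Finset.univ.powersetCard 3) :
    ∑ p ∈ S.sym2, dsym G p ≤ 2 * steinerDist G (S : Set V) := by
  have hcard : S.card = 3 := (Finset.mem_powersetCard_univ.mp hS)
  obtain ⟨x, y, z, hxy, hxz, hyz, rfl⟩ := Finset.card_eq_three.mp hcard
  rw [pairsum_triple G hxy hxz hyz, coe_triple]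
  exact two_sd_ge hG x y z

lemma T_eq_of_modular {V : Type*} [DecidableEq V] [Fintype V] {G : SimpleGraph V}
    (hG : G.Connected) (hm : IsModular G) {S : Finset V}
    (hS : S ∈ Finset.univ.powersetCard 3) :
    ∑ p ∈ S.sym2, dsym G p = 2 * steinerDist G (S : Set V) := by
  have hcard : S.card = 3 := (Finset.mem_powersetCard_univ.mp hS)
  obtain ⟨x, y, z, hxy, hxz, hyz, rfl⟩ := Finset.card_eq_three.mp hcard
  rw [pairsum_triple G hxy hxz hyz, coe_triple]
  exact (two_sd_eq_of_modular hG hm x y z).symm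

lemma key_ineq {V : Type*} [Fintype V] (G : SimpleGraph V) (hG : G.Connected) :
    (Fintype.card V - 2) * wienerIndex G ≤ 2 * steinerWiener G 3 := by
  classical
  have hW : wienerIndex G = ∑ p ∈ (Finset.univ : Finset V).sym2, dsym G p := rfl
  rw [hW, ← double_count, steinerWiener, Finset.mul_sum]
  exact Finset.sum_le_sum fun S hS => T_le hG hS

lemma key_eq_of_modular {V : Type*} [Fintype V] (G : SimpleGraph V) (hG : G.Connected)
    (hm : IsModular G) :
    (Fintype.card V - 2) * wienerIndex G = 2 * steinerWiener G 3 := by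
  classical
  have hW : wienerIndex G = ∑ p ∈ (Finset.univ : Finset V).sym2, dsym G p := rfl
  rw [hW, ← double_count, steinerWiener, Finset.mul_sum]
  exact Finset.sum_congr rfl fun S hS => T_eq_of_modular hG hm hS

lemma modular_of_key_eq {V : Type*} [Fintype V] (G : SimpleGraph V) (hG : G.Connected)
    (heq : (Fintype.card V - 2) * wienerIndex G = 2 * steinerWiener G 3) :
    IsModular G := by
  classical
  intro x y z
  by_cases hdeg : x = y ∨ x = z ∨ y = z
  · exact modular_degenerate G hdeg
  push_neg at hdeg
  obtain ⟨hxy, hxz, hyz⟩ := hdeg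
  have hW : wienerIndex G = ∑ p ∈ (Finset.univ : Finset V).sym2, dsym G p := rfl
  rw [hW, ← double_count, steinerWiener, Finset.mul_sum] at heq
  have hall := (Finset.sum_eq_sum_iff_of_le fun S hS => T_le hG hS).mp heq
  have hmem : ({x, y, z} : Finset V) ∈ Finset.univ.powersetCard 3 := by
    rw [Finset.mem_powersetCard_univ, Finset.card_insert_of_notMem (by simp [hxy, hxz]),
      Finset.card_insert_of_notMem (by simp [hyz]), Finset.card_singleton]
  have h3 := hall _ hmem
  rw [pairsum_triple G hxy hxz hyz, coe_triple] at h3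
  exact median_of_eq hG h3.symm

lemma wiener_zero_of_small {V : Type*} [Fintype V] (G : SimpleGraph V)
    (h : Fintype.card V ≤ 1) : wienerIndex G = 0 := by
  refine Finset.sum_eq_zero fun p _ => ?_
  induction p with
  | h a b =>
    have : a = b := by
      have := Fintype.card_le_one_iff.mp h
      exact this a b
    subst this
    simp [SimpleGraph.dist_self]

lemma sw_zero_of_small {V : Type*} [Fintype V] (G : SimpleGraph V)
    (h : Fintype.card V ≤ 2) : steinerWiener G 3 = 0 := by
  rw [steinerWiener]
  have : (Finset.univ : Finset V).powersetCard 3 = ∅ :=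
    Finset.powersetCard_eq_empty.mpr (by rw [Finset.card_univ]; omega)
  rw [this, Finset.sum_empty]

/-- For a connected graph `G` on `n` vertices, `SW_3(G) ≥ ((n-2)/2)·W(G)`, with
equality if and only if `G` is modular. -/
theorem steinerWiener_three_ge_wiener {V : Type*} (G : SimpleGraph V) [Fintype V]
    (hG : G.Connected) :
    (steinerWiener G 3 : ℝ) ≥ ((Fintype.card V : ℝ) - 2) / 2 * wienerIndex G ∧
      ((steinerWiener G 3 : ℝ) = ((Fintype.card V : ℝ) - 2) / 2 * wienerIndex G ↔
        IsModular G) := by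
  classical
  set n := Fintype.card V with hn
  by_cases h2 : 2 ≤ n
  · have hcast : ((n : ℝ) - 2) = ((n - 2 : ℕ) : ℝ) := by
      push_cast [Nat.cast_sub h2]
      ring
    have hrw : ((n : ℝ) - 2) / 2 * wienerIndex G = ((n - 2) * wienerIndex G : ℕ) / 2 := by
      rw [hcast]; push_cast; ring
    constructor
    · rw [ge_iff_le, hrw, div_le_iff₀ (by norm_num : (0:ℝ) < 2)]
      have := key_ineq G hG
      calc (((n - 2) * wienerIndex G : ℕ) : ℝ) ≤ ((2 * steinerWiener G 3 : ℕ) : ℝ) := by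
            exact_mod_cast this
        _ = (steinerWiener G 3 : ℝ) * 2 := by push_cast; ring
    · constructor
      · intro heq
        apply modular_of_key_eq G hG
        have h' : ((n : ℝ) - 2) * wienerIndex G = 2 * steinerWiener G 3 := by
          rw [heq]; ring
        have h'' : (((n - 2) * wienerIndex G : ℕ) : ℝ)
            = ((2 * steinerWiener G 3 : ℕ) : ℝ) := by
          push_cast [Nat.cast_sub h2]
          exact h'
        exact_mod_cast h''
      · intro hm
        rw [hrw]
        have := key_eq_of_modular G hG hm
        rw [this]
        push_cast
        ring
  · push_neg at h2
    have hW : wienerIndex G = 0 := wiener_zero_of_small G (by omega)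
    have hSW : steinerWiener G 3 = 0 := sw_zero_of_small G (by omega)
    rw [hW, hSW]
    simp only [Nat.cast_zero, mul_zero, ge_iff_le, le_refl, true_and]
    constructor
    · intro _ x y z
      by_cases hdeg : x = y ∨ x = z ∨ y = z
      · exact modular_degenerate G hdeg
      · exfalso
        push_neg at hdeg
        have hc3 : ({x, y, z} : Finset V).card = 3 := by
          rw [Finset.card_insert_of_notMem (by simp [hdeg.1, hdeg.2.1]),
            Finset.card_insert_of_notMem (by simp [hdeg.2.2]), Finset.card_singleton]
        have := Finset.card_le_univ ({x, y, z} : Finset V)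
        rw [hc3, ← hn] at this
        omega
    · intro _; trivial
end

section
/- Let T be a tree on n vertices. Then SW_3(T) = ((n-2)/2) · W(T). -/
namespace SteinerAux

open SimpleGraph Finset

variable {V : Type*} {G : SimpleGraph V} {T : SimpleGraph V}

/-- In a tree, every path realizes the distance. -/
lemma path_length_eq_dist (hc : G.Connected) (ha : G.IsAcyclic) {u v : V}
    {p : G.Walk u v} (hp : p.IsPath) : p.length = G.dist u v := by
  obtain ⟨q, hq, hql⟩ := hc.exists_path_of_dist u v
  have huniq := (SimpleGraph.isAcyclic_iff_path_unique.mp ha)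
    (⟨p, hp⟩ : G.Path u v) (⟨q, hq⟩ : G.Path u v)
  have hpq : p = q := congrArg Subtype.val huniq
  rw [hpq, hql]

/-- Splitting distances at a vertex on a path, in a tree. -/
lemma dist_split (hc : G.Connected) (ha : G.IsAcyclic) {u v x : V}
    {p : G.Walk u v} (hp : p.IsPath) (hx : x ∈ p.support) :
    G.dist u v = G.dist u x + G.dist x v := by
  classical
  have h1 : (p.takeUntil x hx).IsPath := hp.takeUntil hx
  have h2 : (p.dropUntil x hx).IsPath := hp.dropUntil hx
  have hlen := congrArg SimpleGraph.Walk.length (p.take_spec hx)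
  rw [SimpleGraph.Walk.length_append] at hlen
  rw [← path_length_eq_dist hc ha hp, ← path_length_eq_dist hc ha h1,
    ← path_length_eq_dist hc ha h2]
  exact hlen.symm

/-- Appending two paths that only share the common endpoint yields a path. -/
lemma isPath_append {u v w : V} {p : G.Walk u v} {q : G.Walk v w}
    (hp : p.IsPath) (hq : q.IsPath) (h : ∀ x ∈ p.support, x ∈ q.support → x = v) :
    (p.append q).IsPath := by
  rw [SimpleGraph.Walk.isPath_def, SimpleGraph.Walk.support_append]
  have hq' := hq.support_nodup
  rw [q.support_eq_cons, List.nodup_cons] at hq'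
  refine List.Nodup.append hp.support_nodup hq'.2 ?_
  intro x hxp hxq
  have hxq' : x ∈ q.support := by
    rw [q.support_eq_cons]; exact List.mem_cons_of_mem _ hxq
  have hx := h x hxp hxq'
  subst hx
  exact hq'.1 hxq

/-- Every walk has a decomposition at the first vertex belonging to a set `S`
containing the endpoint. -/
lemma exists_first_hit {w u : V} (R : G.Walk w u) (S : Set V) (hu : u ∈ S) :
    ∃ (m : V) (A : G.Walk w m) (B : G.Walk m u), R = A.append B ∧ m ∈ S ∧
      ∀ x ∈ A.support, x ∈ S → x = m := by
  induction R with
  | nil =>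
    refine ⟨_, SimpleGraph.Walk.nil, SimpleGraph.Walk.nil, rfl, hu, ?_⟩
    intro x hx _
    simpa using hx
  | @cons a b c hadj R ih =>
    by_cases ha' : a ∈ S
    · refine ⟨a, SimpleGraph.Walk.nil, SimpleGraph.Walk.cons hadj R, rfl, ha', ?_⟩
      intro x hx _
      simpa using hx
    · obtain ⟨m, A, B, hRB, hmS, hfirst⟩ := ih hu
      refine ⟨m, SimpleGraph.Walk.cons hadj A, B, by rw [hRB, SimpleGraph.Walk.cons_append],
        hmS, ?_⟩
      intro x hx hxS
      rw [SimpleGraph.Walk.support_cons] at hx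
      rcases List.mem_cons.mp hx with rfl | hx
      · exact absurd hxS ha'
      · exact hfirst x hx hxS

/-- Existence of a median vertex in a tree. -/
lemma exists_median (hc : G.Connected) (ha : G.IsAcyclic) (u v w : V) :
    ∃ m : V, G.dist u v = G.dist u m + G.dist m v ∧
      G.dist u w = G.dist u m + G.dist m w ∧
      G.dist v w = G.dist v m + G.dist m w := by
  classical
  obtain ⟨P, hP, hPl⟩ := hc.exists_path_of_dist u v
  obtain ⟨R, hR, hRl⟩ := hc.exists_path_of_dist w u
  obtain ⟨m, A, B, hAB, hmP, hfirst⟩ :=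
    exists_first_hit R {x | x ∈ P.support} P.start_mem_support
  have hA : A.IsPath := by
    rw [hAB] at hR; exact hR.of_append_left
  have hB : B.IsPath := by
    rw [hAB] at hR; exact hR.of_append_right
  have cwu : G.dist w u = G.dist w m + G.dist m u := by
    have e3 := path_length_eq_dist hc ha hR
    rw [hAB, SimpleGraph.Walk.length_append, path_length_eq_dist hc ha hA,
      path_length_eq_dist hc ha hB] at e3
    exact e3.symm
  have cwv : G.dist w v = G.dist w m + G.dist m v := by
    have hD : (P.dropUntil m hmP).IsPath := hP.dropUntil hmP
    have hC : (A.append (P.dropUntil m hmP)).IsPath := by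
      refine isPath_append hA hD ?_
      intro x hx hx2
      exact hfirst x hx (P.support_dropUntil_subset hmP hx2)
    have e := path_length_eq_dist hc ha hC
    rw [SimpleGraph.Walk.length_append, path_length_eq_dist hc ha hA,
      path_length_eq_dist hc ha hD] at e
    exact e.symm
  refine ⟨m, dist_split hc ha hP hmP, ?_, ?_⟩
  · have c1 : G.dist u w = G.dist w u := SimpleGraph.dist_comm
    have c2 : G.dist u m = G.dist m u := SimpleGraph.dist_comm
    have c3 : G.dist m w = G.dist w m := SimpleGraph.dist_comm
    omega
  · have c1 : G.dist v w = G.dist w v := SimpleGraph.dist_comm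
    have c2 : G.dist v m = G.dist m v := SimpleGraph.dist_comm
    have c3 : G.dist m w = G.dist w m := SimpleGraph.dist_comm
    omega

/-- Lower bound: any connected subgraph of a tree containing three vertices
has many edges. -/
lemma sum_dist_le (hc : T.Connected) (ha : T.IsAcyclic) [Fintype V]
    (H : T.Subgraph) (hH : H.Connected) {u v w : V}
    (hu : u ∈ H.verts) (hv : v ∈ H.verts) (hw : w ∈ H.verts) :
    T.dist u v + T.dist u w + T.dist v w ≤ 2 * H.edgeSet.ncard := by
  classical
  have hc' : H.coe.Connected := hH.coe
  have ha' : H.coe.IsAcyclic := by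
    intro x c hcyc
    exact ha (c.map H.hom)
      ((SimpleGraph.Walk.map_isCycle_iff_of_injective Subgraph.hom_injective).mpr hcyc)
  have key : ∀ (x y : H.verts), T.dist (x : V) (y : V) ≤ H.coe.dist x y := by
    intro x y
    obtain ⟨p, hpl⟩ := hc'.exists_walk_length_eq_dist x y
    calc T.dist (x : V) (y : V) ≤ (p.map H.hom).length := SimpleGraph.dist_le _
      _ = H.coe.dist x y := by rw [SimpleGraph.Walk.length_map, hpl]
  set u' : H.verts := ⟨u, hu⟩
  set v' : H.verts := ⟨v, hv⟩
  set w' : H.verts := ⟨w, hw⟩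
  obtain ⟨m, h1, h2, h3⟩ := exists_median hc' ha' u' v' w'
  obtain ⟨P1, hP1, hP1l⟩ := hc'.exists_path_of_dist m u'
  obtain ⟨P2, hP2, hP2l⟩ := hc'.exists_path_of_dist m v'
  obtain ⟨P3, hP3, hP3l⟩ := hc'.exists_path_of_dist m w'
  have inter : ∀ {a b : H.verts} (pa : H.coe.Walk m a) (pb : H.coe.Walk m b),
      pa.IsPath → pb.IsPath →
      H.coe.dist a b = H.coe.dist a m + H.coe.dist m b →
      ∀ x, x ∈ pa.support → x ∈ pb.support → x = m := by
    intro a b pa pb hpa hpb hmed x hxa hxb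
    have e1 := dist_split hc' ha' hpa hxa
    have e2 := dist_split hc' ha' hpb hxb
    have tri : H.coe.dist a b ≤ H.coe.dist a x + H.coe.dist x b := hc'.dist_triangle
    have c1 : H.coe.dist a m = H.coe.dist m a := SimpleGraph.dist_comm
    have c2 : H.coe.dist a x = H.coe.dist x a := SimpleGraph.dist_comm
    have hx0 : H.coe.dist m x = 0 := by omega
    exact (hc'.dist_eq_zero_iff.mp hx0).symm
  set s1 := P1.support.toFinset with hs1
  set s2 := P2.support.toFinset with hs2
  set s3 := P3.support.toFinset with hs3
  have hc1 : s1.card = H.coe.dist m u' + 1 := by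
    rw [hs1, List.toFinset_card_of_nodup hP1.support_nodup,
      SimpleGraph.Walk.length_support, hP1l]
  have hc2 : s2.card = H.coe.dist m v' + 1 := by
    rw [hs2, List.toFinset_card_of_nodup hP2.support_nodup,
      SimpleGraph.Walk.length_support, hP2l]
  have hc3 : s3.card = H.coe.dist m w' + 1 := by
    rw [hs3, List.toFinset_card_of_nodup hP3.support_nodup,
      SimpleGraph.Walk.length_support, hP3l]
  have hmed12 : H.coe.dist u' v' = H.coe.dist u' m + H.coe.dist m v' := h1
  have hmed13 : H.coe.dist u' w' = H.coe.dist u' m + H.coe.dist m w' := h2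
  have hmed23 : H.coe.dist v' w' = H.coe.dist v' m + H.coe.dist m w' := h3
  have i12 : s1 ∩ s2 = {m} := by
    ext x
    simp only [Finset.mem_inter, hs1, hs2, List.mem_toFinset, Finset.mem_singleton]
    constructor
    · rintro ⟨hx1, hx2⟩
      exact inter P1 P2 hP1 hP2 hmed12 x hx1 hx2
    · rintro rfl
      exact ⟨P1.start_mem_support, P2.start_mem_support⟩
  have i13 : s1 ∩ s3 = {m} := by
    ext x
    simp only [Finset.mem_inter, hs1, hs3, List.mem_toFinset, Finset.mem_singleton]
    constructor
    · rintro ⟨hx1, hx2⟩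
      exact inter P1 P3 hP1 hP3 hmed13 x hx1 hx2
    · rintro rfl
      exact ⟨P1.start_mem_support, P3.start_mem_support⟩
  have i23 : s2 ∩ s3 = {m} := by
    ext x
    simp only [Finset.mem_inter, hs2, hs3, List.mem_toFinset, Finset.mem_singleton]
    constructor
    · rintro ⟨hx1, hx2⟩
      exact inter P2 P3 hP2 hP3 hmed23 x hx1 hx2
    · rintro rfl
      exact ⟨P2.start_mem_support, P3.start_mem_support⟩
  have hu12 : (s1 ∪ s2).card + 1 = s1.card + s2.card := by
    have := Finset.card_union_add_card_inter s1 s2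
    rw [i12, Finset.card_singleton] at this
    exact this
  have i123 : (s1 ∪ s2) ∩ s3 = {m} := by
    rw [Finset.union_inter_distrib_right, i13, i23, Finset.union_self]
  have hu123 : ((s1 ∪ s2) ∪ s3).card + 1 = (s1 ∪ s2).card + s3.card := by
    have := Finset.card_union_add_card_inter (s1 ∪ s2) s3
    rw [i123, Finset.card_singleton] at this
    exact this
  have hle : ((s1 ∪ s2) ∪ s3).card ≤ Fintype.card H.verts := Finset.card_le_univ _
  have htree : H.coe.IsTree := ⟨hc', ha'⟩
  letI : Fintype H.coe.edgeSet := (Set.toFinite _).fintype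
  have hedge : H.coe.edgeFinset.card + 1 = Fintype.card H.verts := htree.card_edgeFinset
  have hnc : H.edgeSet.ncard = H.coe.edgeFinset.card := by
    rw [← SimpleGraph.Subgraph.image_coe_edgeSet_coe,
      Set.ncard_image_of_injective _ (Sym2.map.injective Subtype.val_injective),
      Set.ncard_eq_toFinset_card']
    congr 1
  have hd1 : T.dist u v ≤ H.coe.dist u' v' := key u' v'
  have hd2 : T.dist u w ≤ H.coe.dist u' w' := key u' w'
  have hd3 : T.dist v w ≤ H.coe.dist v' w' := key v' w'
  have cc1 : H.coe.dist u' m = H.coe.dist m u' := SimpleGraph.dist_comm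
  have cc2 : H.coe.dist v' m = H.coe.dist m v' := SimpleGraph.dist_comm
  omega

/-- The Steiner distance of a triple of vertices in a tree. -/
lemma steiner3 [Fintype V] (hc : T.Connected) (ha : T.IsAcyclic) (u v w : V) :
    2 * steinerDist T {u, v, w} = T.dist u v + T.dist u w + T.dist v w := by
  classical
  obtain ⟨m, h1, h2, h3⟩ := exists_median hc ha u v w
  obtain ⟨pu, hpu, hpul⟩ := hc.exists_path_of_dist m u
  obtain ⟨pv, hpv, hpvl⟩ := hc.exists_path_of_dist m v
  obtain ⟨pw, hpw, hpwl⟩ := hc.exists_path_of_dist m w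
  set W0 := pu.reverse.append (pv.append (pv.reverse.append pw)) with hW0
  have hverts : ({u, v, w} : Set V) ⊆ W0.toSubgraph.verts := by
    rw [SimpleGraph.Walk.verts_toSubgraph]
    intro x hx
    rcases hx with rfl | rfl | rfl <;>
      simp [hW0, SimpleGraph.Walk.mem_support_append_iff]
  have hedges : W0.toSubgraph.edgeSet.ncard ≤ T.dist m u + T.dist m v + T.dist m w := by
    have hsub : W0.toSubgraph.edgeSet ⊆
        ↑(pu.edges.toFinset ∪ pv.edges.toFinset ∪ pw.edges.toFinset) := by
      rw [SimpleGraph.Walk.edgeSet_toSubgraph]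
      intro e he
      simp only [hW0, SimpleGraph.Walk.mem_edgeSet, SimpleGraph.Walk.edges_append, List.mem_append,
        SimpleGraph.Walk.edges_reverse, List.mem_reverse, Set.mem_setOf_eq] at he
      simp only [Finset.coe_union, Set.mem_union, Finset.mem_coe, List.mem_toFinset]
      tauto
    calc W0.toSubgraph.edgeSet.ncard
        ≤ (pu.edges.toFinset ∪ pv.edges.toFinset ∪ pw.edges.toFinset).card := by
          rw [← Set.ncard_coe_finset]
          exact Set.ncard_le_ncard hsub (Finset.finite_toSet _)
      _ ≤ pu.edges.toFinset.card + pv.edges.toFinset.card + pw.edges.toFinset.card := by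
          refine (Finset.card_union_le _ _).trans ?_
          have := Finset.card_union_le pu.edges.toFinset pv.edges.toFinset
          omega
      _ ≤ pu.edges.length + pv.edges.length + pw.edges.length := by
          have a1 := List.toFinset_card_le pu.edges
          have a2 := List.toFinset_card_le pv.edges
          have a3 := List.toFinset_card_le pw.edges
          omega
      _ = T.dist m u + T.dist m v + T.dist m w := by
          rw [SimpleGraph.Walk.length_edges, SimpleGraph.Walk.length_edges,
            SimpleGraph.Walk.length_edges, hpul, hpvl, hpwl]
  set Sset := {n | ∃ H : T.Subgraph, H.Connected ∧ ({u, v, w} : Set V) ⊆ H.verts ∧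
    H.edgeSet.ncard = n} with hSset
  have hne : Sset.Nonempty := ⟨_, W0.toSubgraph, W0.toSubgraph_connected, hverts, rfl⟩
  have hup : steinerDist T {u, v, w} ≤ T.dist m u + T.dist m v + T.dist m w := by
    refine le_trans (Nat.sInf_le ?_) hedges
    exact ⟨W0.toSubgraph, W0.toSubgraph_connected, hverts, rfl⟩
  have hmem : steinerDist T ({u, v, w} : Set V) ∈ Sset := Nat.sInf_mem hne
  obtain ⟨H, hHc, hHsub, hHcard⟩ := hmem
  have hlow := sum_dist_le hc ha H hHc (hHsub (show u ∈ ({u,v,w}:Set V) by simp))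
    (hHsub (show v ∈ ({u,v,w}:Set V) by simp)) (hHsub (show w ∈ ({u,v,w}:Set V) by simp))
  rw [hHcard] at hlow
  have cc1 : T.dist u m = T.dist m u := SimpleGraph.dist_comm
  have cc2 : T.dist v m = T.dist m v := SimpleGraph.dist_comm
  omega

set_option maxHeartbeats 1600000 in
lemma sym2_triple [DecidableEq V] (u v w : V) :
    ({u, v, w} : Finset V).sym2 =
      {s(u, u), s(u, v), s(u, w), s(v, v), s(v, w), s(w, w)} := by
  ext p
  induction p using Sym2.ind with
  | _ a b =>
    simp only [Finset.mk_mem_sym2_iff, Finset.mem_insert, Finset.mem_singleton, Sym2.eq_iff]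
    tauto

set_option maxHeartbeats 1600000 in
lemma sum_triple [Fintype V] [DecidableEq V] {u v w : V} (huv : u ≠ v) (huw : u ≠ w)
    (hvw : v ≠ w) :
    ∑ p ∈ ({u, v, w} : Finset V).sym2,
      Sym2.lift ⟨fun a b => T.dist a b, fun _ _ => SimpleGraph.dist_comm⟩ p
      = T.dist u v + T.dist u w + T.dist v w := by
  rw [sym2_triple u v w]
  rw [Finset.sum_insert (by simp only [Finset.mem_insert, Finset.mem_singleton, Sym2.eq_iff]; tauto),
    Finset.sum_insert (by simp only [Finset.mem_insert, Finset.mem_singleton, Sym2.eq_iff]; tauto),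
    Finset.sum_insert (by simp only [Finset.mem_insert, Finset.mem_singleton, Sym2.eq_iff]; tauto),
    Finset.sum_insert (by simp only [Finset.mem_insert, Finset.mem_singleton, Sym2.eq_iff]; tauto),
    Finset.sum_insert (by simp only [Finset.mem_singleton, Sym2.eq_iff]; tauto),
    Finset.sum_singleton]
  simp only [Sym2.lift_mk, SimpleGraph.dist_self]
  omega

lemma count_pairs [Fintype V] [DecidableEq V] {a b : V} (hab : a ≠ b) :
    ((Finset.univ.powersetCard 3).filter (fun S : Finset V => a ∈ S ∧ b ∈ S)).card
      = Fintype.card V - 2 := by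
  have h2 : (Finset.univ \ {a, b} : Finset V).card = Fintype.card V - 2 := by
    rw [Finset.card_sdiff_of_subset (Finset.subset_univ _), Finset.card_univ,
      Finset.card_insert_of_notMem (by simpa using hab), Finset.card_singleton]
  rw [← h2]
  symm
  apply Finset.card_bij (fun (c : V) _ => ({a, b, c} : Finset V))
  · intro c hc
    simp only [Finset.mem_sdiff, Finset.mem_insert, Finset.mem_singleton, not_or] at hc
    obtain ⟨-, hca, hcb⟩ := hc
    rw [Finset.mem_filter, Finset.mem_powersetCard]
    refine ⟨⟨Finset.subset_univ _, ?_⟩, by simp, by simp⟩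
    rw [Finset.card_insert_of_notMem (by simp [hab, Ne.symm hca]),
      Finset.card_insert_of_notMem (by simp [Ne.symm hcb]), Finset.card_singleton]
  · intro c hc c' hc' h
    simp only [Finset.mem_sdiff, Finset.mem_insert, Finset.mem_singleton, not_or] at hc hc'
    have : c ∈ ({a, b, c'} : Finset V) := by rw [← h]; simp
    simp only [Finset.mem_insert, Finset.mem_singleton] at this
    rcases this with rfl | rfl | rfl
    · exact absurd rfl hc.2.1
    · exact absurd rfl hc.2.2
    · rfl
  · intro S hS
    rw [Finset.mem_filter, Finset.mem_powersetCard] at hS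
    obtain ⟨⟨-, hcard⟩, haS, hbS⟩ := hS
    have hsub : ({a, b} : Finset V) ⊆ S := by
      intro x hx
      simp only [Finset.mem_insert, Finset.mem_singleton] at hx
      rcases hx with rfl | rfl
      · exact haS
      · exact hbS
    have hdc : (S \ {a, b}).card = 1 := by
      rw [Finset.card_sdiff_of_subset hsub, hcard,
        Finset.card_insert_of_notMem (by simpa using hab), Finset.card_singleton]
    obtain ⟨c, hc⟩ := Finset.card_eq_one.mp hdc
    have hcS : c ∈ S \ ({a, b} : Finset V) := by rw [hc]; simp
    rw [Finset.mem_sdiff] at hcS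
    refine ⟨c, ?_, ?_⟩
    · simp only [Finset.mem_sdiff, Finset.mem_univ, true_and]
      exact hcS.2
    · have := Finset.union_sdiff_of_subset hsub
      rw [hc] at this
      rw [← this]
      ext x
      simp only [Finset.mem_insert, Finset.mem_singleton, Finset.mem_union]
      tauto

end SteinerAux

open SteinerAux Finset in
/-- For a tree `T` on `n` vertices, `SW_3(T) = ((n-2)/2)·W(T)`. -/
theorem steinerWiener_three_tree {V : Type*} (T : SimpleGraph V) [Fintype V]
    (hconn : T.Connected) (hacyclic : T.IsAcyclic) :
    (steinerWiener T 3 : ℝ) = ((Fintype.card V : ℝ) - 2) / 2 * wienerIndex T := by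
  classical
  set f : Sym2 V → ℕ :=
    fun p => Sym2.lift ⟨fun u v => T.dist u v, fun _ _ => SimpleGraph.dist_comm⟩ p with hf
  set n := Fintype.card V with hn
  have key : 2 * steinerWiener T 3 = (n - 2) * wienerIndex T := by
    rw [steinerWiener, Finset.mul_sum, wienerIndex]
    have step1 : ∀ S ∈ (Finset.univ : Finset V).powersetCard 3,
        2 * steinerDist T (S : Set V) = ∑ p ∈ S.sym2, f p := by
      intro S hS
      have hcard : S.card = 3 := (Finset.mem_powersetCard.mp hS).2
      obtain ⟨u, v, w, huv, huw, hvw, rfl⟩ := Finset.card_eq_three.mp hcard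
      have hcoe : ((({u, v, w} : Finset V) : Set V)) = ({u, v, w} : Set V) := by simp
      rw [hcoe, steiner3 hconn hacyclic u v w]
      exact (sum_triple huv huw hvw).symm
    rw [Finset.sum_congr rfl step1]
    have step2 : ∀ S ∈ (Finset.univ : Finset V).powersetCard 3,
        ∑ p ∈ S.sym2, f p = ∑ p ∈ (Finset.univ : Finset V).sym2,
          if p ∈ S.sym2 then f p else 0 := by
      intro S hS
      rw [Finset.sum_ite_mem]
      congr 1
      exact (Finset.inter_eq_right.mpr (Finset.sym2_mono (Finset.subset_univ S))).symm
    rw [Finset.sum_congr rfl step2, Finset.sum_comm]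
    have step3 : ∀ p ∈ (Finset.univ : Finset V).sym2,
        (∑ S ∈ (Finset.univ : Finset V).powersetCard 3, if p ∈ S.sym2 then f p else 0)
          = (n - 2) * f p := by
      intro p _
      rw [← Finset.sum_filter, Finset.sum_const, smul_eq_mul]
      induction p using Sym2.ind with
      | _ a b =>
        by_cases hab : a = b
        · subst hab
          have : f s(a, a) = 0 := by simp [hf, SimpleGraph.dist_self]
          rw [this, Nat.mul_zero, Nat.mul_zero]
        · congr 1
          have hfilter : ((Finset.univ : Finset V).powersetCard 3).filter
              (fun S => s(a, b) ∈ S.sym2)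
              = ((Finset.univ : Finset V).powersetCard 3).filter
                (fun S : Finset V => a ∈ S ∧ b ∈ S) := by
            apply Finset.filter_congr
            intro S _
            simp [Finset.mk_mem_sym2_iff]
          rw [hfilter, count_pairs hab]
    rw [Finset.sum_congr rfl step3, ← Finset.mul_sum]
  rcases le_or_gt 2 n with h2 | h2
  · have hcast : ((2 * steinerWiener T 3 : ℕ) : ℝ) = (((n - 2) * wienerIndex T : ℕ) : ℝ) := by
      exact_mod_cast congrArg (Nat.cast : ℕ → ℝ) key
    push_cast [Nat.cast_sub h2] at hcast
    rw [hn] at hcast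
    field_simp
    linarith
  · interval_cases n
    all_goals {
      have hW : wienerIndex T = 0 := by
        rw [wienerIndex]
        apply Finset.sum_eq_zero
        intro p hp
        induction p using Sym2.ind with
        | _ a b =>
          have hab : a = b := by
            have hle : Fintype.card V ≤ 1 := by omega
            exact Subsingleton.elim (α := V) (h := Fintype.card_le_one_iff_subsingleton.mp hle) a b
          subst hab
          simp [SimpleGraph.dist_self]
      have hS : steinerWiener T 3 = 0 := by
        rw [steinerWiener, Finset.powersetCard_eq_empty.mpr
          (by rw [Finset.card_univ]; omega), Finset.sum_empty]
      rw [hW, hS]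
      simp
    }
end

section
/- Let G and H be connected graphs. Then W(G □ H) = |V(G)|² · W(H) + |V(H)|² · W(G). -/
open SimpleGraph Finset

private lemma dist_boxProd_le {α β : Type*} {G : SimpleGraph α} {H : SimpleGraph β}
    (hG : G.Connected) (hH : H.Connected) (a b : α) (x y : β) :
    (G.boxProd H).dist (a, x) (b, y) ≤ G.dist a b + H.dist x y := by
  obtain ⟨wG, hwG⟩ := (hG a b).exists_walk_length_eq_dist
  obtain ⟨wH, hwH⟩ := (hH x y).exists_walk_length_eq_dist
  have := SimpleGraph.dist_le ((wG.boxProdLeft H x).append (wH.boxProdRight G b))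
  rw [SimpleGraph.Walk.length_append] at this
  have h1 : (wG.boxProdLeft H x).length = wG.length := SimpleGraph.Walk.length_map _ _
  have h2 : (wH.boxProdRight G b).length = wH.length := SimpleGraph.Walk.length_map _ _
  omega

private lemma le_walk_length {α β : Type*} {G : SimpleGraph α} {H : SimpleGraph β}
    (hG : G.Connected) (hH : H.Connected)
    {z w : α × β} (p : (G.boxProd H).Walk z w) :
    G.dist z.1 w.1 + H.dist z.2 w.2 ≤ p.length := by
  induction p with
  | nil => simp
  | @cons u v w h p ih =>
    rcases SimpleGraph.boxProd_adj.mp h with ⟨hadj, heq⟩ | ⟨hadj, heq⟩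
    · have h1 : G.dist u.1 w.1 ≤ G.dist v.1 w.1 + 1 := by
        have ht := hG.dist_triangle (u := u.1) (v := v.1) (w := w.1)
        have he := SimpleGraph.dist_eq_one_iff_adj.mpr hadj
        omega
      have h2 : H.dist u.2 w.2 = H.dist v.2 w.2 := by rw [heq]
      simp only [SimpleGraph.Walk.length_cons]
      omega
    · have h1 : H.dist u.2 w.2 ≤ H.dist v.2 w.2 + 1 := by
        have ht := hH.dist_triangle (u := u.2) (v := v.2) (w := w.2)
        have he := SimpleGraph.dist_eq_one_iff_adj.mpr hadj
        omega
      have h2 : G.dist u.1 w.1 = G.dist v.1 w.1 := by rw [heq]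
      simp only [SimpleGraph.Walk.length_cons]
      omega

private lemma dist_boxProd {α β : Type*} {G : SimpleGraph α} {H : SimpleGraph β}
    (hG : G.Connected) (hH : H.Connected) (a b : α) (x y : β) :
    (G.boxProd H).dist (a, x) (b, y) = G.dist a b + H.dist x y := by
  refine le_antisymm (dist_boxProd_le hG hH a b x y) ?_
  obtain ⟨p, hp⟩ := ((hG.boxProd hH) (a, x) (b, y)).exists_walk_length_eq_dist
  have := le_walk_length hG hH p
  simpa [hp] using this

private lemma two_mul_wiener {V : Type*} (G : SimpleGraph V) [Fintype V] :
    2 * wienerIndex G = ∑ u : V, ∑ v : V, G.dist u v := by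
  classical
  have hmaps : ∀ z ∈ (Finset.univ ×ˢ Finset.univ : Finset (V × V)),
      Sym2.mk z.1 z.2 ∈ (Finset.univ : Finset V).sym2 := by
    rintro ⟨u, v⟩ _
    simp [Finset.mk_mem_sym2_iff]
  rw [← Finset.sum_product']
  rw [← Finset.sum_fiberwise_of_maps_to hmaps (fun z => G.dist z.1 z.2)]
  rw [wienerIndex, Finset.mul_sum]
  refine Finset.sum_congr rfl fun p hp => ?_
  induction p using Sym2.ind with
  | _ a b =>
    have hfib : (Finset.univ ×ˢ Finset.univ : Finset (V × V)).filter
        (fun z => Sym2.mk z.1 z.2 = s(a, b)) = {(a, b), (b, a)} := by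
      ext ⟨u, v⟩
      simp [Sym2.eq_iff, Prod.ext_iff, or_comm, and_comm, eq_comm]
    have hdist : ∀ z ∈ (Finset.univ ×ˢ Finset.univ : Finset (V × V)).filter
        (fun z => Sym2.mk z.1 z.2 = s(a, b)), G.dist z.1 z.2 = G.dist a b := by
      rintro ⟨u, v⟩ hz
      simp only [Finset.mem_filter] at hz
      rcases Sym2.eq_iff.mp hz.2 with ⟨h1, h2⟩ | ⟨h1, h2⟩
      · rw [h1, h2]
      · rw [h1, h2, SimpleGraph.dist_comm]
    rw [Finset.sum_congr rfl hdist, Finset.sum_const, hfib]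
    by_cases hab : a = b
    · subst hab
      simp [SimpleGraph.dist_self]
    · rw [Finset.card_insert_of_notMem (by simp [Prod.ext_iff]; tauto), Finset.card_singleton]
      simp [Sym2.lift]

/-- For connected graphs `G` and `H`,
`W(G □ H) = |V(G)|²·W(H) + |V(H)|²·W(G)`. -/
theorem wienerIndex_boxProd {α β : Type*} (G : SimpleGraph α) (H : SimpleGraph β)
    [Fintype α] [Fintype β] (hG : G.Connected) (hH : H.Connected) :
    wienerIndex (G.boxProd H) =
      (Fintype.card α) ^ 2 * wienerIndex H + (Fintype.card β) ^ 2 * wienerIndex G := by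
  have key : 2 * wienerIndex (G.boxProd H) =
      2 * ((Fintype.card α) ^ 2 * wienerIndex H + (Fintype.card β) ^ 2 * wienerIndex G) := by
    rw [two_mul_wiener]
    have : ∑ z : α × β, ∑ w : α × β, (G.boxProd H).dist z w
        = ∑ a : α, ∑ x : β, ∑ b : α, ∑ y : β, (G.dist a b + H.dist x y) := by
      rw [Fintype.sum_prod_type]
      refine Finset.sum_congr rfl fun a _ => ?_
      refine Finset.sum_congr rfl fun x _ => ?_
      rw [Fintype.sum_prod_type]
      refine Finset.sum_congr rfl fun b _ => ?_
      refine Finset.sum_congr rfl fun y _ => ?_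
      exact dist_boxProd hG hH a b x y
    rw [this]
    simp only [Finset.sum_add_distrib, Finset.sum_const, Finset.card_univ, smul_eq_mul,
      ← Finset.mul_sum]
    rw [← two_mul_wiener, ← two_mul_wiener]
    ring
  omega
end

section
/- Let G and H be connected modular graphs. Then SW_3(G □ H) = ((|V(G)|·|V(H)| − 2)/2) · ( |V(G)|² · W(H) + |V(H)|² · W(G) ). -/
open SimpleGraph Finset

noncomputable def distSum {V : Type*} (G : SimpleGraph V) [Fintype V] : ℕ :=
  ∑ p : V × V, G.dist p.1 p.2

section Lower
variable {α : Type*} {G : SimpleGraph α}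

/-- distance in ambient graph is at most distance in a connected subgraph -/
private lemma dist_le_coe_dist {K : G.Subgraph} (hK : K.Connected) (u v : K.verts) :
    G.dist (u : α) (v : α) ≤ K.coe.dist u v := by
  obtain ⟨p, hp⟩ := (hK.coe u v).exists_walk_length_eq_dist
  have := SimpleGraph.dist_le (p.map K.hom)
  rwa [Walk.length_map, hp] at this

private lemma per_le_two_mul_ncard [Fintype α] {K : G.Subgraph}
    (hK : K.Connected) {x y z : α} (hx : x ∈ K.verts) (hy : y ∈ K.verts) (hz : z ∈ K.verts) :
    G.dist x y + G.dist x z + G.dist y z ≤ 2 * K.edgeSet.ncard := by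
  classical
  set x' : K.verts := ⟨x, hx⟩
  set y' : K.verts := ⟨y, hy⟩
  set z' : K.verts := ⟨z, hz⟩
  -- shortest path from x' to y'
  obtain ⟨p, hpath, hplen⟩ := (hK.coe x' y').exists_path_of_dist
  -- minimize distance from z' to the support of p
  obtain ⟨w, hw, hwmin⟩ := Finset.exists_min_image p.support.toFinset
    (fun u => K.coe.dist z' u) ⟨x', by simp⟩
  rw [List.mem_toFinset] at hw
  simp only [List.mem_toFinset] at hwmin
  -- shortest path from z' to w
  obtain ⟨q, hqpath, hqlen⟩ := (hK.coe z' w).exists_path_of_dist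
  have hqmin : ∀ u ∈ q.support, u ∈ p.support → u = w := by
    intro u huq hup
    have h1 : K.coe.dist z' u ≤ (q.takeUntil u huq).length := SimpleGraph.dist_le _
    have h2 : K.coe.dist z' w ≤ K.coe.dist z' u := hwmin u hup
    have h0 : q.length = K.coe.dist z' w := hqlen
    have h3 : (q.takeUntil u huq).length + (q.dropUntil u huq).length = q.length := by
      have := congr_arg Walk.length (q.take_spec huq)
      rwa [Walk.length_append] at this
    have h4 : (q.dropUntil u huq).length = 0 := by omega
    exact Walk.eq_of_length_eq_zero h4
  -- the edges of p and q are disjoint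
  have hdis : ∀ e ∈ p.edges, e ∉ q.edges := by
    intro e hep heq
    induction e with
    | h a b =>
      have ha := p.fst_mem_support_of_mem_edges hep
      have hb := p.snd_mem_support_of_mem_edges hep
      have ha' := q.fst_mem_support_of_mem_edges heq
      have hb' := q.snd_mem_support_of_mem_edges heq
      have hA : a = w := hqmin a ha' ha
      have hB : b = w := hqmin b hb' hb
      exact (p.adj_of_mem_edges hep).ne (hA.trans hB.symm)
  -- count edges
  have hnodup : (p.edges ++ q.edges).Nodup := by
    rw [List.nodup_append]
    exact ⟨hpath.edges_nodup, hqpath.edges_nodup, fun e he e' he' hee => by subst hee; exact hdis e he he'⟩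
  have hcard : (p.edges ++ q.edges).toFinset.card = p.length + q.length := by
    rw [List.toFinset_card_of_nodup hnodup, List.length_append, Walk.length_edges,
      Walk.length_edges]
  have hsub : (((p.edges ++ q.edges).toFinset.image
      (Sym2.map (Subtype.val : K.verts → α))) : Set (Sym2 α)) ⊆ K.edgeSet := by
    intro e he
    simp only [Finset.coe_image, Set.mem_image, Finset.mem_coe, List.mem_toFinset,
      List.mem_append] at he
    obtain ⟨e', he', rfl⟩ := he
    have : e' ∈ K.coe.edgeSet := by
      rcases he' with h | h
      · exact p.edges_subset_edgeSet h
      · exact q.edges_subset_edgeSet h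
    rw [← K.image_coe_edgeSet_coe]
    exact Set.mem_image_of_mem _ this
  have hcount : p.length + q.length ≤ K.edgeSet.ncard := by
    have h1 : ((p.edges ++ q.edges).toFinset.image
        (Sym2.map (Subtype.val : K.verts → α))).card = p.length + q.length := by
      rw [Finset.card_image_of_injective _ (Sym2.map.injective Subtype.val_injective), hcard]
    calc p.length + q.length
        = (((p.edges ++ q.edges).toFinset.image
            (Sym2.map (Subtype.val : K.verts → α))) : Set (Sym2 α)).ncard := by
          rw [Set.ncard_coe_finset, h1]
      _ ≤ K.edgeSet.ncard := Set.ncard_le_ncard hsub (Set.toFinite _)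
  -- distance bounds
  have hab : (p.takeUntil w hw).length + (p.dropUntil w hw).length = p.length := by
    have := congr_arg Walk.length (p.take_spec hw)
    rwa [Walk.length_append] at this
  have d1 : G.dist x y ≤ p.length := by
    have := SimpleGraph.dist_le (p.map K.hom)
    rwa [Walk.length_map] at this
  have d2 : G.dist x z ≤ (p.takeUntil w hw).length + q.length := by
    have := SimpleGraph.dist_le (((p.takeUntil w hw).append q.reverse).map K.hom)
    rwa [Walk.length_map, Walk.length_append, Walk.length_reverse] at this
  have d3 : G.dist y z ≤ (p.dropUntil w hw).length + q.length := by
    have := SimpleGraph.dist_le (((p.dropUntil w hw).reverse.append q.reverse).map K.hom)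
    rw [Walk.length_map, Walk.length_append, Walk.length_reverse, Walk.length_reverse] at this
    exact this
  omega

private lemma ncard_walk_edgeSet [Fintype α] {u v : α} (p : G.Walk u v) :
    p.toSubgraph.edgeSet.ncard ≤ p.length := by
  classical
  rw [Walk.edgeSet_toSubgraph]
  calc ({e | e ∈ p.edges} : Set (Sym2 α)).ncard = (p.edges.toFinset : Set (Sym2 α)).ncard := by
        congr 1
        ext e
        simp
    _ = p.edges.toFinset.card := Set.ncard_coe_finset _
    _ ≤ p.edges.length := p.edges.toFinset_card_le
    _ = p.length := p.length_edges

private lemma steinerDist_triple [Fintype α] (hG : G.Connected) (hGm : IsModular G)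
    (x y z : α) :
    2 * steinerDist G {x, y, z} = G.dist x y + G.dist x z + G.dist y z := by
  classical
  obtain ⟨m, ⟨⟨hm1, hm2⟩, hm3⟩⟩ := hGm x y z
  simp only [interval, Set.mem_setOf_eq] at hm1 hm2 hm3
  have c1 : G.dist m x = G.dist x m := SimpleGraph.dist_comm
  have c2 : G.dist m y = G.dist y m := SimpleGraph.dist_comm
  have c3 : G.dist m z = G.dist z m := SimpleGraph.dist_comm
  set t := G.dist x m + G.dist y m + G.dist z m with ht
  -- construct subgraph realizing t
  obtain ⟨p, -, hp⟩ := hG.exists_path_of_dist m x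
  obtain ⟨q, -, hq⟩ := hG.exists_path_of_dist m y
  obtain ⟨r, -, hr⟩ := hG.exists_path_of_dist m z
  set K : G.Subgraph := p.toSubgraph ⊔ q.toSubgraph ⊔ r.toSubgraph with hKdef
  have hKconn : K.Connected := by
    refine SimpleGraph.Subgraph.connected_sup ?_ r.toSubgraph_connected.preconnected
      ⟨m, ?_, r.start_mem_verts_toSubgraph⟩
    · exact (SimpleGraph.Subgraph.connected_sup p.toSubgraph_connected.preconnected
          q.toSubgraph_connected.preconnected
          ⟨m, p.start_mem_verts_toSubgraph, q.start_mem_verts_toSubgraph⟩).preconnected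
    · exact Or.inl p.start_mem_verts_toSubgraph
  have hKverts : ({x, y, z} : Set α) ⊆ K.verts := by
    rw [hKdef]
    simp only [Subgraph.verts_sup]
    intro u hu
    rcases hu with rfl | rfl | rfl
    · exact Or.inl (Or.inl p.end_mem_verts_toSubgraph)
    · exact Or.inl (Or.inr q.end_mem_verts_toSubgraph)
    · exact Or.inr r.end_mem_verts_toSubgraph
  have hKcard : K.edgeSet.ncard ≤ t := by
    rw [hKdef]
    calc (p.toSubgraph ⊔ q.toSubgraph ⊔ r.toSubgraph).edgeSet.ncard
        ≤ (p.toSubgraph ⊔ q.toSubgraph).edgeSet.ncard + r.toSubgraph.edgeSet.ncard := by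
          rw [Subgraph.edgeSet_sup]
          exact Set.ncard_union_le _ _
      _ ≤ p.toSubgraph.edgeSet.ncard + q.toSubgraph.edgeSet.ncard
            + r.toSubgraph.edgeSet.ncard := by
          rw [Subgraph.edgeSet_sup]
          have := Set.ncard_union_le p.toSubgraph.edgeSet q.toSubgraph.edgeSet
          omega
      _ ≤ p.length + q.length + r.length := by
          have := ncard_walk_edgeSet p
          have := ncard_walk_edgeSet q
          have := ncard_walk_edgeSet r
          omega
      _ = t := by rw [hp, hq, hr, ht, c1, c2, c3]
  -- lower bound for any member of the set
  have hlow : ∀ n ∈ {n | ∃ L : G.Subgraph, L.Connected ∧ ({x, y, z} : Set α) ⊆ L.verts ∧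
      L.edgeSet.ncard = n}, t ≤ n := by
    rintro n ⟨L, hLc, hLv, rfl⟩
    have hx : x ∈ L.verts := hLv (by simp)
    have hy : y ∈ L.verts := hLv (by simp)
    have hz : z ∈ L.verts := hLv (by simp)
    have := per_le_two_mul_ncard hLc hx hy hz
    omega
  have hKmem : K.edgeSet.ncard ∈ {n | ∃ L : G.Subgraph, L.Connected ∧
      ({x, y, z} : Set α) ⊆ L.verts ∧ L.edgeSet.ncard = n} := ⟨K, hKconn, hKverts, rfl⟩
  have hKt : K.edgeSet.ncard = t := le_antisymm hKcard (hlow _ hKmem)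
  have hsd : steinerDist G {x, y, z} = t := by
    rw [steinerDist]
    refine le_antisymm (le_of_le_of_eq (Nat.sInf_le hKmem) hKt) ?_
    exact le_csInf ⟨_, hKmem⟩ hlow
  rw [hsd]
  omega

end Lower

section Box
variable {α β : Type*} {G : SimpleGraph α} {H : SimpleGraph β}

private lemma boxProd_dist_le_walk (hG : G.Connected) (hH : H.Connected) :
    ∀ {p q : α × β} (w : (G.boxProd H).Walk p q),
      G.dist p.1 q.1 + H.dist p.2 q.2 ≤ w.length := by
  intro p q w
  induction w with
  | nil => simp
  | @cons u v q hadj w ih =>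
    rw [SimpleGraph.boxProd_adj] at hadj
    rcases hadj with ⟨h1, h2⟩ | ⟨h1, h2⟩
    · have : G.dist u.1 q.1 ≤ 1 + G.dist v.1 q.1 := by
        calc G.dist u.1 q.1 ≤ G.dist u.1 v.1 + G.dist v.1 q.1 := hG.dist_triangle
        _ ≤ 1 + G.dist v.1 q.1 := by
            have := (SimpleGraph.dist_eq_one_iff_adj.2 h1).le
            omega
      rw [Walk.length_cons, h2]
      omega
    · have : H.dist u.2 q.2 ≤ 1 + H.dist v.2 q.2 := by
        calc H.dist u.2 q.2 ≤ H.dist u.2 v.2 + H.dist v.2 q.2 := hH.dist_triangle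
        _ ≤ 1 + H.dist v.2 q.2 := by
            have := (SimpleGraph.dist_eq_one_iff_adj.2 h1).le
            omega
      rw [Walk.length_cons, h2]
      omega

lemma boxProd_dist (hG : G.Connected) (hH : H.Connected) (a b : α) (x y : β) :
    (G.boxProd H).dist (a, x) (b, y) = G.dist a b + H.dist x y := by
  refine le_antisymm ?_ ?_
  · obtain ⟨p, -, hp⟩ := hG.exists_path_of_dist a b
    obtain ⟨q, -, hq⟩ := hH.exists_path_of_dist x y
    have := SimpleGraph.dist_le ((p.boxProdLeft H x).append (q.boxProdRight G b))
    have hl : ((p.boxProdLeft H x).append (q.boxProdRight G b)).length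
        = p.length + q.length := by
      rw [Walk.length_append]
      exact congrArg₂ (· + ·) (Walk.length_map _ p) (Walk.length_map _ q)
    rw [hl, hp, hq] at this
    exact this
  · obtain ⟨w, hw⟩ := ((hG.boxProd hH) (a, x) (b, y)).exists_walk_length_eq_dist
    have := boxProd_dist_le_walk hG hH w
    rw [hw] at this
    exact this

lemma isModular_boxProd (hG : G.Connected) (hH : H.Connected)
    (hGm : IsModular G) (hHm : IsModular H) : IsModular (G.boxProd H) := by
  rintro ⟨a1, x1⟩ ⟨a2, x2⟩ ⟨a3, x3⟩
  obtain ⟨m, ⟨⟨hm1, hm2⟩, hm3⟩⟩ := hGm a1 a2 a3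
  obtain ⟨n, ⟨⟨hn1, hn2⟩, hn3⟩⟩ := hHm x1 x2 x3
  simp only [interval, Set.mem_setOf_eq] at hm1 hm2 hm3 hn1 hn2 hn3
  refine ⟨(m, n), ⟨⟨?_, ?_⟩, ?_⟩⟩ <;>
    simp only [interval, Set.mem_setOf_eq, boxProd_dist hG hH] <;> omega


lemma two_mul_wienerIndex [Fintype α] (G : SimpleGraph α) :
    2 * wienerIndex G = distSum G := by
  classical
  letI : LinearOrder α := LinearOrder.lift' _ (Fintype.equivFin α).injective
  set f : Sym2 α → ℕ := Sym2.lift ⟨fun u v => G.dist u v, fun _ _ => SimpleGraph.dist_comm⟩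
    with hf
  have hdiag : ∑ i ∈ (univ : Finset α).sym2 with i.IsDiag, f i = 0 := by
    refine Finset.sum_eq_zero ?_
    intro i hi
    induction i with
    | h a b =>
      simp only [Finset.mem_filter, Sym2.isDiag_iff_proj_eq] at hi
      have hab : a = b := hi.2
      subst hab
      simp [hf, SimpleGraph.dist_self]
  have hsplit : wienerIndex G = ∑ i ∈ (univ : Finset α).sym2 with ¬ i.IsDiag, f i := by
    rw [wienerIndex, ← Finset.sum_filter_add_sum_filter_not ((univ : Finset α).sym2)
      (fun i => i.IsDiag) f, hdiag, zero_add]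
  have hkey : ∑ i ∈ (univ : Finset α).sym2 with ¬ i.IsDiag, f i =
      ∑ i ∈ (univ : Finset α).offDiag with i.1 < i.2, G.dist i.1 i.2 := by
    rw [Finset.sum_sym2_filter_not_isDiag]
    rfl
  -- now the ordered sum
  have hds : distSum G = ∑ p ∈ (univ : Finset α).offDiag, G.dist p.1 p.2 := by
    rw [distSum, ← Finset.univ_product_univ]
    rw [← Finset.sum_filter_add_sum_filter_not ((univ : Finset α) ×ˢ (univ : Finset α))
      (fun p => p.1 ≠ p.2) (fun p => G.dist p.1 p.2)]
    have h2 : ∑ p ∈ ((univ : Finset α) ×ˢ univ) with ¬ p.1 ≠ p.2, G.dist p.1 p.2 = 0 := by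
      refine Finset.sum_eq_zero ?_
      intro p hp
      simp only [Finset.mem_filter, not_not] at hp
      rw [hp.2, SimpleGraph.dist_self]
    rw [h2, add_zero]
    refine Finset.sum_congr ?_ (fun _ _ => rfl)
    ext ⟨a, b⟩
    simp
  have hsw : ∑ p ∈ (univ : Finset α).offDiag with ¬ p.1 < p.2, G.dist p.1 p.2 =
      ∑ p ∈ (univ : Finset α).offDiag with p.1 < p.2, G.dist p.1 p.2 := by
    refine Finset.sum_nbij' (fun p => (p.2, p.1)) (fun p => (p.2, p.1)) ?_ ?_ ?_ ?_ ?_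
    · intro p hp
      simp only [Finset.mem_filter, Finset.mem_offDiag] at hp ⊢
      obtain ⟨⟨h1, h2, hne⟩, hnl⟩ := hp
      exact ⟨⟨h2, h1, (Ne.symm hne)⟩, (Ne.lt_or_gt hne).resolve_left hnl⟩
    · intro p hp
      simp only [Finset.mem_filter, Finset.mem_offDiag] at hp ⊢
      obtain ⟨⟨h1, h2, hne⟩, hl⟩ := hp
      exact ⟨⟨h2, h1, Ne.symm hne⟩, not_lt.2 hl.le⟩
    · intro p _; rfl
    · intro p _; rfl
    · intro p _
      exact SimpleGraph.dist_comm
  rw [hsplit, hkey, hds,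
    ← Finset.sum_filter_add_sum_filter_not ((univ : Finset α).offDiag)
      (fun p => p.1 < p.2) (fun p => G.dist p.1 p.2), hsw]
  ring

lemma distSum_boxProd [Fintype α] [Fintype β] (hG : G.Connected) (hH : H.Connected) :
    distSum (G.boxProd H) =
      Fintype.card β ^ 2 * distSum G + Fintype.card α ^ 2 * distSum H := by
  have hdef : ∀ p q : α × β, (G.boxProd H).dist p q = G.dist p.1 q.1 + H.dist p.2 q.2 := by
    rintro ⟨a, x⟩ ⟨b, y⟩
    exact boxProd_dist hG hH a b x y
  rw [distSum]
  simp only [hdef]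
  rw [Finset.sum_add_distrib]
  congr 1
  · refine (Fintype.sum_equiv (Equiv.prodProdProdComm α β α β)
      (fun p : (α × β) × (α × β) => G.dist p.1.1 p.2.1)
      (fun q : (α × α) × (β × β) => G.dist q.1.1 q.1.2) (fun p => rfl)).trans ?_
    rw [Fintype.sum_prod_type]
    simp only [Finset.sum_const, Finset.card_univ, Fintype.card_prod, smul_eq_mul]
    rw [← Finset.mul_sum, distSum, sq]
  · refine (Fintype.sum_equiv (Equiv.prodProdProdComm α β α β)
      (fun p : (α × β) × (α × β) => H.dist p.1.2 p.2.2)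
      (fun q : (α × α) × (β × β) => H.dist q.2.1 q.2.2) (fun p => rfl)).trans ?_
    rw [Fintype.sum_prod_type]
    simp only [Finset.sum_const, Finset.card_univ, Fintype.card_prod, Finset.sum_const,
      smul_eq_mul]
    rw [distSum, sq]



end Box

section Count

variable {V : Type*} [Fintype V] [DecidableEq V]

lemma card_filter_mem_mem {u v : V} (huv : u ≠ v) :
    (((Finset.univ : Finset V).powersetCard 3).filter (fun S => u ∈ S ∧ v ∈ S)).card =
      Fintype.card V - 2 := by
  have himg : (((Finset.univ : Finset V).powersetCard 3).filter (fun S => u ∈ S ∧ v ∈ S)) =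
      (Finset.univ \ {u, v}).image (fun w => insert w {u, v}) := by
    ext S
    simp only [Finset.mem_filter, Finset.mem_powersetCard, Finset.mem_image,
      Finset.mem_sdiff, Finset.mem_univ, true_and, Finset.mem_insert, Finset.mem_singleton]
    constructor
    · rintro ⟨⟨-, hcard⟩, hu, hv⟩
      have hsub : ({u, v} : Finset V) ⊆ S := by
        intro w hw
        rcases Finset.mem_insert.mp hw with rfl | hw
        · exact hu
        · rw [Finset.mem_singleton] at hw; subst hw; exact hv
      have hcuv : ({u, v} : Finset V).card = 2 := by
        rw [Finset.card_insert_of_notMem (by simpa using huv), Finset.card_singleton]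
      have : (S \ {u, v}).card = 1 := by
        rw [Finset.card_sdiff_of_subset hsub, hcard, hcuv]
      obtain ⟨w, hw⟩ := Finset.card_eq_one.mp this
      have hwS : w ∈ S \ ({u, v} : Finset V) := hw ▸ Finset.mem_singleton_self w
      rw [Finset.mem_sdiff] at hwS
      refine ⟨w, by simpa using hwS.2, ?_⟩
      refine Finset.eq_of_subset_of_card_le ?_ ?_
      · intro s hs
        rcases Finset.mem_insert.mp hs with rfl | hs
        · exact hwS.1
        · exact hsub hs
      · rw [hcard, Finset.card_insert_of_notMem (by simpa using hwS.2), hcuv]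

    · rintro ⟨w, hw, rfl⟩
      have hwuv : w ∉ ({u, v} : Finset V) := by simpa using hw
      refine ⟨⟨Finset.subset_univ _, ?_⟩, ?_, ?_⟩
      · rw [Finset.card_insert_of_notMem hwuv,
          Finset.card_insert_of_notMem (by simpa using huv), Finset.card_singleton]
      · simp
      · simp
  rw [himg, Finset.card_image_of_injOn, Finset.card_sdiff_of_subset (Finset.subset_univ _),
    Finset.card_univ, Finset.card_insert_of_notMem (by simpa using huv),
    Finset.card_singleton]
  intro w hw w' hw' he
  simp only [Finset.mem_coe, Finset.mem_sdiff, Finset.mem_univ, true_and] at hw hw'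
  have he' : insert w ({u, v} : Finset V) = insert w' ({u, v} : Finset V) := he
  have : w ∈ insert w' ({u, v} : Finset V) := by
    rw [← he']; exact Finset.mem_insert_self _ _
  rcases Finset.mem_insert.mp this with h | h
  · exact h
  · exact absurd h hw


end Count

lemma four_mul_steinerWiener {V : Type*} [Fintype V] (G : SimpleGraph V)
    (hG : G.Connected) (hGm : IsModular G) :
    4 * steinerWiener G 3 + 2 * distSum G = Fintype.card V * distSum G := by
  classical
  have step1 : 4 * steinerWiener G 3 =
      ∑ S ∈ (univ : Finset V).powersetCard 3, ∑ p ∈ S ×ˢ S, G.dist p.1 p.2 := by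
    rw [steinerWiener, Finset.mul_sum]
    refine Finset.sum_congr rfl ?_
    intro S hS
    rw [Finset.mem_powersetCard] at hS
    obtain ⟨x, y, z, hxy, hxz, hyz, rfl⟩ := Finset.card_eq_three.mp hS.2
    have hcoe : ((({x, y, z} : Finset V)) : Set V) = ({x, y, z} : Set V) := by simp
    rw [hcoe]
    have h2 := steinerDist_triple hG hGm x y z
    have c1 : G.dist y x = G.dist x y := SimpleGraph.dist_comm
    have c2 : G.dist z x = G.dist x z := SimpleGraph.dist_comm
    have c3 : G.dist z y = G.dist y z := SimpleGraph.dist_comm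
    have expand : ∀ f : V → ℕ, ∑ v ∈ ({x, y, z} : Finset V), f v = f x + (f y + f z) := by
      intro f
      rw [Finset.sum_insert (by simp [hxy, hxz]), Finset.sum_insert (by simp [hyz]),
        Finset.sum_singleton]
    rw [Finset.sum_product, expand, expand, expand, expand]
    simp only [SimpleGraph.dist_self, c1, c2, c3]
    omega
  have step2 : ∑ S ∈ (univ : Finset V).powersetCard 3, ∑ p ∈ S ×ˢ S, G.dist p.1 p.2
      = ∑ p ∈ (univ : Finset V) ×ˢ univ,
          ((((univ : Finset V).powersetCard 3).filter
            (fun S => p.1 ∈ S ∧ p.2 ∈ S)).card) * G.dist p.1 p.2 := by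
    rw [Finset.sum_comm' (s := (univ : Finset V).powersetCard 3) (t := fun S => S ×ˢ S)
      (t' := (univ : Finset V) ×ˢ univ)
      (s' := fun p => ((univ : Finset V).powersetCard 3).filter
        (fun S => p.1 ∈ S ∧ p.2 ∈ S))
      (fun S p => by simp only [Finset.mem_product, Finset.mem_filter, Finset.mem_univ,
        true_and, and_true]; try tauto)]
    refine Finset.sum_congr rfl fun p _ => ?_
    rw [Finset.sum_const, smul_eq_mul]
  have step3 : ∀ p ∈ (univ : Finset V) ×ˢ (univ : Finset V),
      ((((univ : Finset V).powersetCard 3).filter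
        (fun S => p.1 ∈ S ∧ p.2 ∈ S)).card) * G.dist p.1 p.2 + 2 * G.dist p.1 p.2
        = Fintype.card V * G.dist p.1 p.2 := by
    intro p _
    by_cases h : p.1 = p.2
    · rw [h, SimpleGraph.dist_self]
      ring
    · have hc := card_filter_mem_mem h
      have h2 : 2 ≤ Fintype.card V := Fintype.one_lt_card_iff_nontrivial.mpr ⟨⟨p.1, p.2, h⟩⟩
      rw [hc, ← Nat.add_mul, Nat.sub_add_cancel h2]
  have hD : distSum G = ∑ p ∈ (univ : Finset V) ×ˢ (univ : Finset V), G.dist p.1 p.2 := by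
    rw [distSum, ← Finset.univ_product_univ]
  calc 4 * steinerWiener G 3 + 2 * distSum G
      = ∑ p ∈ (univ : Finset V) ×ˢ univ,
          (((((univ : Finset V).powersetCard 3).filter
            (fun S => p.1 ∈ S ∧ p.2 ∈ S)).card) * G.dist p.1 p.2 + 2 * G.dist p.1 p.2) := by
        rw [step1, step2, hD, Finset.sum_add_distrib, Finset.mul_sum]
    _ = ∑ p ∈ (univ : Finset V) ×ˢ univ, Fintype.card V * G.dist p.1 p.2 :=
        Finset.sum_congr rfl step3
    _ = Fintype.card V * distSum G := by rw [hD, Finset.mul_sum]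


/-- For connected modular graphs `G` and `H`,
`SW_3(G □ H) = ((|V(G)|·|V(H)| − 2)/2)·(|V(G)|²·W(H) + |V(H)|²·W(G))`. -/
theorem steinerWiener_three_boxProd_wiener {α β : Type*} (G : SimpleGraph α)
    (H : SimpleGraph β) [Fintype α] [Fintype β] (hG : G.Connected) (hH : H.Connected)
    (hGm : IsModular G) (hHm : IsModular H) :
    (steinerWiener (G.boxProd H) 3 : ℝ) =
      ((Fintype.card α : ℝ) * Fintype.card β - 2) / 2 *
        ((Fintype.card α : ℝ) ^ 2 * wienerIndex H +
          (Fintype.card β : ℝ) ^ 2 * wienerIndex G) := by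
  classical
  have hBconn : (G.boxProd H).Connected := hG.boxProd hH
  have hBmod : IsModular (G.boxProd H) := isModular_boxProd hG hH hGm hHm
  have e1 : 4 * steinerWiener (G.boxProd H) 3 + 2 * distSum (G.boxProd H)
      = Fintype.card (α × β) * distSum (G.boxProd H) :=
    four_mul_steinerWiener _ hBconn hBmod
  have e2 := distSum_boxProd hG hH
  have e3 := two_mul_wienerIndex G
  have e4 := two_mul_wienerIndex H
  rw [Fintype.card_prod] at e1
  have E1 : (4 : ℝ) * steinerWiener (G.boxProd H) 3 + 2 * distSum (G.boxProd H)
      = ((Fintype.card α : ℝ) * (Fintype.card β : ℝ)) * distSum (G.boxProd H) := by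
    exact_mod_cast e1
  have hD : (distSum (G.boxProd H) : ℝ)
      = 2 * ((Fintype.card α : ℝ) ^ 2 * wienerIndex H
          + (Fintype.card β : ℝ) ^ 2 * wienerIndex G) := by
    have E2 : (distSum (G.boxProd H) : ℝ) = (Fintype.card β : ℝ) ^ 2 * distSum G
        + (Fintype.card α : ℝ) ^ 2 * distSum H := by exact_mod_cast e2
    have E3 : (2 : ℝ) * wienerIndex G = distSum G := by exact_mod_cast e3
    have E4 : (2 : ℝ) * wienerIndex H = distSum H := by exact_mod_cast e4
    rw [E2, ← E3, ← E4]
    ring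
  linear_combination (1 / 4 : ℝ) * E1
    + ((Fintype.card α : ℝ) * (Fintype.card β : ℝ) / 4 - 1 / 2) * hD
end

section
/- For any integer n ≥ 1, the Wiener index of the Lucas cube satisfies W(Λ_n) = n · F_{n−1} · F_{n+1}. -/
/-- The `n`-dimensional hypercube `Q_n`: vertices are binary strings of length `n`,
two strings being adjacent iff they differ in exactly one position. -/
def hypercube (n : ℕ) : SimpleGraph (Fin n → Bool) where
  Adj a b := (Finset.univ.filter fun i => a i ≠ b i).card = 1
  symm := by
    constructor
    intro a b h
    have hc : (Finset.univ.filter fun i => b i ≠ a i) =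
        (Finset.univ.filter fun i => a i ≠ b i) := by
      apply Finset.filter_congr
      intro i _
      simp [ne_comm]
    rw [hc]
    exact h
  loopless := by
    constructor
    intro a h
    simp at h

/-- A Fibonacci string of length `n`: a binary string with no two consecutive ones. -/
def fibWord (n : ℕ) (b : Fin n → Bool) : Prop :=
  ∀ i j : Fin n, (j : ℕ) = (i : ℕ) + 1 → ¬(b i = true ∧ b j = true)

instance (n : ℕ) : DecidablePred (fibWord n) := fun b =>
  inferInstanceAs (Decidable
    (∀ i j : Fin n, (j : ℕ) = (i : ℕ) + 1 → ¬(b i = true ∧ b j = true)))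

/-- The Fibonacci cube `Γ_n`: the subgraph of the hypercube `Q_n` induced by the
Fibonacci strings of length `n`. -/
def fibonacciCube (n : ℕ) : SimpleGraph {b : Fin n → Bool // fibWord n b} :=
  (hypercube n).comap Subtype.val
/-- A Lucas string of length `n`: a Fibonacci string whose first and last entries are
not both one. -/
def lucasWord (n : ℕ) (b : Fin n → Bool) : Prop :=
  fibWord n b ∧
    ∀ i j : Fin n, (i : ℕ) = 0 → (j : ℕ) = n - 1 → ¬(b i = true ∧ b j = true)

instance (n : ℕ) : DecidablePred (lucasWord n) := fun b =>
  inferInstanceAs (Decidable (fibWord n b ∧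
    ∀ i j : Fin n, (i : ℕ) = 0 → (j : ℕ) = n - 1 → ¬(b i = true ∧ b j = true)))

/-- The Lucas cube `Λ_n`: the subgraph of the hypercube `Q_n` induced by the Lucas
strings of length `n`. -/
def lucasCube (n : ℕ) : SimpleGraph {b : Fin n → Bool // lucasWord n b} :=
  (hypercube n).comap Subtype.val

/-- The Lucas numbers: `L_0 = 2`, `L_1 = 1`, `L_n = L_{n-1} + L_{n-2}`. -/
def lucasNum : ℕ → ℕ
  | 0 => 2
  | 1 => 1
  | n + 2 => lucasNum (n + 1) + lucasNum n

lemma ham_update_step {n : ℕ} (u v : Fin n → Bool) (i : Fin n) (h : u i ≠ v i) :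
    hammingDist (Function.update u i (v i)) v + 1 = hammingDist u v := by
  have he : ({j | Function.update u i (v i) j ≠ v j} : Finset (Fin n))
      = ({j | u j ≠ v j} : Finset (Fin n)).erase i := by
    ext j
    rcases eq_or_ne j i with rfl | hj
    · simp [Function.update_self]
    · simp [Function.update_of_ne hj, hj]
  rw [hammingDist, hammingDist, he, Finset.card_erase_of_mem (by simp [h])]
  have : 0 < ({j | u j ≠ v j} : Finset (Fin n)).card :=
    Finset.card_pos.2 ⟨i, by simp [h]⟩
  omega

lemma ham_update_adj {n : ℕ} (u : Fin n → Bool) (i : Fin n) (x : Bool) (h : u i ≠ x) :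
    hammingDist u (Function.update u i x) = 1 := by
  have he : ({j | u j ≠ Function.update u i x j} : Finset (Fin n)) = {i} := by
    ext j
    rcases eq_or_ne j i with rfl | hj
    · simp [Function.update_self, h]
    · simp [Function.update_of_ne hj, hj]
  rw [hammingDist, he, Finset.card_singleton]

lemma lucasWord_mono {n : ℕ} {b v : Fin n → Bool} (hv : lucasWord n v)
    (h : ∀ j, b j = true → v j = true) : lucasWord n b := by
  constructor
  · intro i j hj hc
    exact hv.1 i j hj ⟨h i hc.1, h j hc.2⟩
  · intro i j hi hj hc
    exact hv.2 i j hi hj ⟨h i hc.1, h j hc.2⟩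


lemma exists_walk_aux (n : ℕ) : ∀ (d : ℕ) (u v : {b : Fin n → Bool // lucasWord n b}),
    hammingDist u.val v.val = d → ∃ w : (lucasCube n).Walk u v, w.length = d := by
  intro d
  induction d using Nat.strong_induction_on with
  | _ d ih =>
    intro u v hd
    rcases Nat.eq_zero_or_pos d with rfl | hdpos
    · have : u = v := Subtype.ext (eq_of_hammingDist_eq_zero hd)
      subst this; exact ⟨SimpleGraph.Walk.nil, rfl⟩
    · have key : ∀ (i : Fin n), u.val i ≠ v.val i →
          lucasWord n (Function.update u.val i (v.val i)) →
          ∃ w : (lucasCube n).Walk u v, w.length = d := by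
        intro i hne hluc
        set u' : {b : Fin n → Bool // lucasWord n b} := ⟨Function.update u.val i (v.val i), hluc⟩
        have hadj : (lucasCube n).Adj u u' := ham_update_adj u.val i (v.val i) hne
        have hstep := ham_update_step u.val v.val i hne
        obtain ⟨w', hw'⟩ := ih (d-1) (by omega) u' v (by
          show hammingDist (Function.update u.val i (v.val i)) v.val = d - 1
          omega)
        exact ⟨SimpleGraph.Walk.cons hadj w', by
          rw [SimpleGraph.Walk.length_cons, hw']; omega⟩
      have hex : ∃ i, u.val i ≠ v.val i := by
        have : u.val ≠ v.val := by
          intro h; rw [← hammingDist_eq_zero] at h; omega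
        exact Function.ne_iff.1 this
      by_cases hA : ∃ i, u.val i = true ∧ v.val i = false
      · obtain ⟨i, hui, hvi⟩ := hA
        have hne : u.val i ≠ v.val i := by simp [hui, hvi]
        refine key i hne ?_
        apply lucasWord_mono u.2
        intro j hj
        rcases eq_or_ne j i with rfl | hji
        · rw [Function.update_self, hvi] at hj; exact absurd hj (by simp)
        · rwa [Function.update_of_ne hji] at hj
      · push_neg at hA
        obtain ⟨i, hne⟩ := hex
        refine key i hne ?_
        apply lucasWord_mono v.2
        intro j hj
        rcases eq_or_ne j i with rfl | hji
        · rwa [Function.update_self] at hj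
        · rw [Function.update_of_ne hji] at hj
          by_cases h2 : u.val j = v.val j
          · rw [← h2]; exact hj
          · cases hv : v.val j
            · exact absurd (hA j hj) (by simp [hv])
            · rfl

lemma ham_le_walk {n : ℕ} {u v : {b : Fin n → Bool // lucasWord n b}}
    (w : (lucasCube n).Walk u v) : hammingDist u.val v.val ≤ w.length := by
  induction w with
  | nil => simp
  | @cons a b c h p ih =>
    have h1 : hammingDist a.val b.val = 1 := h
    have := hammingDist_triangle a.val b.val c.val
    rw [SimpleGraph.Walk.length_cons]
    omega

lemma lucas_dist {n : ℕ} (u v : {b : Fin n → Bool // lucasWord n b}) :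
    (lucasCube n).dist u v = hammingDist u.val v.val := by
  obtain ⟨w, hw⟩ := exists_walk_aux n (hammingDist u.val v.val) u v rfl
  refine le_antisymm (hw ▸ SimpleGraph.dist_le w) ?_
  obtain ⟨w', hw'⟩ := SimpleGraph.Reachable.exists_walk_length_eq_dist ⟨w⟩
  rw [← hw']
  exact ham_le_walk w'

def fibSet (m : ℕ) : Finset (Fin m → Bool) := Finset.univ.filter (fibWord m)

lemma fibWord_zero (b : Fin 0 → Bool) : fibWord 0 b := by
  intro i; exact absurd i.2 (by omega)

lemma fibWord_one (b : Fin 1 → Bool) : fibWord 1 b := by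
  intro i j hj; omega

lemma fibSet_true_card (m : ℕ) (hm1 : m + 1 < m + 2) :
    ((fibSet (m+2)).filter fun b => b ⟨m+1, hm1⟩ = true).card = (fibSet m).card := by
  apply Finset.card_nbij'
    (i := fun b => fun i : Fin m => b (i.castLE (Nat.le_add_right m 2)))
    (j := fun c => fun i : Fin (m+2) =>
      if h : i.val < m then c ⟨i.val, h⟩ else decide (i.val = m+1))
  · intro b hb
    simp only [Finset.mem_coe, Finset.mem_filter, fibSet, Finset.mem_univ, true_and] at hb ⊢
    intro i j hj hc
    refine hb.1 (i.castLE (Nat.le_add_right m 2)) (j.castLE (Nat.le_add_right m 2))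
      ?_ hc
    simpa using hj
  · intro c hc
    simp only [Finset.mem_coe, Finset.mem_filter, fibSet, Finset.mem_univ, true_and] at hc ⊢
    refine ⟨?_, by beta_reduce; rw [dif_neg (by omega)]; simp⟩
    intro i j hj hcc
    obtain ⟨h1, h2⟩ := hcc
    beta_reduce at h1 h2
    by_cases hi : i.val < m
    · by_cases hjm : j.val < m
      · rw [dif_pos hi] at h1; rw [dif_pos hjm] at h2
        exact hc ⟨i, hi⟩ ⟨j, hjm⟩ (by simpa using hj) ⟨h1, h2⟩
      · rw [dif_neg hjm] at h2
        have : (j : ℕ) = m + 1 := by simpa using h2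
        omega
    · rw [dif_neg hi] at h1
      have hi1 : (i : ℕ) = m + 1 := by simpa using h1
      omega
  · intro b hb
    simp only [Finset.mem_coe, Finset.mem_filter, fibSet, Finset.mem_univ, true_and] at hb
    funext i
    beta_reduce
    by_cases hi : i.val < m
    · rw [dif_pos hi]; rfl
    · rw [dif_neg hi]
      rcases Nat.lt_or_ge i.val (m+1) with h1 | h1
      · have him : (i : ℕ) = m := by omega
        have hieq : i = (⟨m, by omega⟩ : Fin (m+2)) := Fin.ext him
        have hnb := hb.1 ⟨m, by omega⟩ ⟨m+1, hm1⟩ (by simp)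
        have hbm : b i = false := by
          rw [hieq]
          cases hm : b ⟨m, by omega⟩
          · rfl
          · exact absurd ⟨hm, hb.2⟩ hnb
        rw [hbm]
        simp only [him, decide_eq_false_iff_not]
        omega
      · have him : (i : ℕ) = m + 1 := by omega
        have hieq : i = (⟨m+1, hm1⟩ : Fin (m+2)) := Fin.ext him
        have hbm : b i = true := by rw [hieq]; exact hb.2
        rw [hbm]
        simp [him]
  · intro c hc
    funext i
    beta_reduce
    simp [i.isLt]

lemma fibSet_false_card (m : ℕ) (hm1 : m + 1 < m + 2) :
    ((fibSet (m+2)).filter fun b => ¬(b ⟨m+1, hm1⟩ = true)).card = (fibSet (m+1)).card := by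
  apply Finset.card_nbij'
    (i := fun b => fun i : Fin (m+1) => b (i.castLE (Nat.le_add_right (m+1) 1)))
    (j := fun c => fun i : Fin (m+2) =>
      if h : i.val < m+1 then c ⟨i.val, h⟩ else false)
  · intro b hb
    simp only [Finset.mem_coe, Finset.mem_filter, fibSet, Finset.mem_univ, true_and] at hb ⊢
    intro i j hj hc
    refine hb.1 (i.castLE (Nat.le_add_right (m+1) 1)) (j.castLE (Nat.le_add_right (m+1) 1))
      ?_ hc
    simpa using hj
  · intro c hc
    simp only [Finset.mem_coe, Finset.mem_filter, fibSet, Finset.mem_univ, true_and] at hc ⊢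
    refine ⟨?_, by beta_reduce; rw [dif_neg (by omega)]; simp⟩
    intro i j hj hcc
    obtain ⟨h1, h2⟩ := hcc
    beta_reduce at h1 h2
    by_cases hjm : j.val < m + 1
    · rw [dif_pos (by omega : (i : ℕ) < m + 1)] at h1; rw [dif_pos hjm] at h2
      exact hc ⟨i, by omega⟩ ⟨j, hjm⟩ (by simpa using hj) ⟨h1, h2⟩
    · rw [dif_neg hjm] at h2; simp at h2
  · intro b hb
    simp only [Finset.mem_coe, Finset.mem_filter, fibSet, Finset.mem_univ, true_and] at hb
    funext i
    beta_reduce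
    by_cases hi : i.val < m + 1
    · rw [dif_pos hi]; rfl
    · rw [dif_neg hi]
      have him : (i : ℕ) = m + 1 := by omega
      have hieq : i = (⟨m+1, hm1⟩ : Fin (m+2)) := Fin.ext him
      have hbm : b i = false := by
        rw [hieq]
        cases hm : b ⟨m+1, hm1⟩
        · rfl
        · exact absurd hm hb.2
      rw [hbm]
  · intro c hc
    funext i
    beta_reduce
    simp [i.isLt]

lemma fibSet_card : ∀ m, (fibSet m).card = Nat.fib (m + 2) := by
  intro m
  induction m using Nat.strong_induction_on with
  | _ m ih =>
    match m with
    | 0 =>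
      have h0 : fibSet 0 = Finset.univ := by
        apply Finset.filter_true_of_mem; intro b _; exact fibWord_zero b
      rw [h0, Finset.card_univ]
      simp
    | 1 =>
      have h0 : fibSet 1 = Finset.univ := by
        apply Finset.filter_true_of_mem; intro b _; exact fibWord_one b
      rw [h0, Finset.card_univ]
      decide
    | (m + 2) =>
      classical
      have hm1 : m + 1 < m + 2 := by omega
      have htrue := fibSet_true_card m hm1
      have hfalse := fibSet_false_card m hm1
      have key : (fibSet m).card + (fibSet (m+1)).card = (fibSet (m+2)).card := by
        rw [← htrue, ← hfalse]
        exact Finset.card_filter_add_card_filter_not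
          (s := fibSet (m+2)) (p := fun b => b ⟨m+1, hm1⟩ = true)
      have h1 := ih m (Nat.lt_succ_of_lt (Nat.lt_succ_self m))
      have h2 := ih (m+1) (Nat.lt_succ_self (m+1))
      have hfib : Nat.fib (m + 2 + 2) = Nat.fib (m + 1 + 2) + Nat.fib (m + 2) := by
        rw [Nat.fib_add_two (n := m + 2)]
        have h3 : m + 2 + 1 = m + 1 + 2 := rfl
        rw [h3]
        exact Nat.add_comm _ _
      rw [← key, h1, h2, hfib]
      exact Nat.add_comm _ _

def lucasSet (n : ℕ) : Finset (Fin n → Bool) := Finset.univ.filter (lucasWord n)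

lemma fin_add_one_val {n : ℕ} [NeZero n] (i : Fin n) :
    ((i + 1 : Fin n) : ℕ) = if (i : ℕ) + 1 = n then 0 else (i : ℕ) + 1 := by
  have hn := Nat.pos_of_ne_zero (NeZero.ne n)
  have hv : ((i + 1 : Fin n) : ℕ) = ((i : ℕ) + 1 % n) % n := by
    rw [Fin.val_add, Fin.val_one']
  rcases eq_or_ne n 1 with rfl | h1
  · have h0 : (i : ℕ) = 0 := by have := i.2; omega
    rw [hv]; simp [h0]
  · have h1n : 1 % n = 1 := Nat.mod_eq_of_lt (by omega)
    rw [hv, h1n]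
    rcases eq_or_ne ((i : ℕ) + 1) n with h | h
    · rw [if_pos h, h, Nat.mod_self]
    · rw [if_neg h, Nat.mod_eq_of_lt (by have := i.2; omega)]

lemma lucasWord_iff_cyclic {n : ℕ} [NeZero n] (b : Fin n → Bool) :
    lucasWord n b ↔ ∀ i : Fin n, ¬(b i = true ∧ b (i + 1) = true) := by
  constructor
  · rintro ⟨hf, hw⟩ i hc
    by_cases hlt : (i : ℕ) + 1 < n
    · exact hf i (i + 1) (by rw [fin_add_one_val, if_neg (by omega)]) hc
    · have hv : ((i + 1 : Fin n) : ℕ) = 0 := by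
        rw [fin_add_one_val, if_pos (by have := i.2; omega)]
      exact hw (i + 1) i hv (by have := i.2; omega) ⟨hc.2, hc.1⟩
  · intro h
    constructor
    · intro i j hj hc
      have hij : j = i + 1 := by
        apply Fin.ext
        rw [fin_add_one_val, if_neg (by have := j.2; omega)]
        exact hj
      exact h i ⟨hc.1, by rw [← hij]; exact hc.2⟩
    · intro i j hi hj hc
      have hn := Nat.pos_of_ne_zero (NeZero.ne n)
      have hji : i = j + 1 := by
        apply Fin.ext
        rw [fin_add_one_val, if_pos (by have := j.2; omega)]
        exact hi
      exact h j ⟨hc.2, by rw [← hji]; exact hc.1⟩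

lemma lucas_rot {n : ℕ} [NeZero n] (k : Fin n) {b : Fin n → Bool} (hb : lucasWord n b) :
    lucasWord n (fun j => b (j + k)) := by
  rw [lucasWord_iff_cyclic] at hb ⊢
  intro i hc
  apply hb (i + k)
  refine ⟨hc.1, ?_⟩
  have : i + k + 1 = i + 1 + k := add_right_comm i k 1
  rw [this]
  exact hc.2

lemma lucas_count_rot {n : ℕ} [NeZero n] (i : Fin n) :
    ((lucasSet n).filter fun b => b i = true).card
      = ((lucasSet n).filter fun b => b 0 = true).card := by
  classical
  apply Finset.card_nbij' (i := fun b => fun j => b (j + i)) (j := fun c => fun j => c (j - i))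
  · intro b hb
    simp only [Finset.mem_coe, Finset.mem_filter, lucasSet, Finset.mem_univ, true_and] at hb ⊢
    exact ⟨lucas_rot i hb.1, by rw [zero_add]; exact hb.2⟩
  · intro c hc
    simp only [Finset.mem_coe, Finset.mem_filter, lucasSet, Finset.mem_univ, true_and] at hc ⊢
    constructor
    · have := lucas_rot (-i) hc.1
      simpa [sub_eq_add_neg] using this
    · have : i - i = 0 := sub_self i
      rw [this]; exact hc.2
  · intro b _
    funext j
    simp
  · intro c _
    funext j
    simp

lemma lucas_false_card (m : ℕ) :
    ((lucasSet (m+1)).filter fun b => b 0 = false).card = (fibSet m).card := by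
  classical
  apply Finset.card_nbij'
    (i := fun b => fun i : Fin m => b i.succ)
    (j := fun c => fun i : Fin (m+1) => if h : 0 < i.val then c ⟨i.val - 1, by omega⟩ else false)
  · intro b hb
    simp only [Finset.mem_coe, Finset.mem_filter, lucasSet, fibSet, Finset.mem_univ, true_and] at hb ⊢
    intro i j hj hc
    exact hb.1.1 i.succ j.succ (by simp; omega) hc
  · intro c hc
    simp only [Finset.mem_coe, Finset.mem_filter, lucasSet, fibSet, Finset.mem_univ, true_and] at hc ⊢
    refine ⟨⟨?_, ?_⟩, ?_⟩
    · intro i j hj hcc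
      obtain ⟨h1, h2⟩ := hcc
      beta_reduce at h1 h2
      by_cases hi : 0 < i.val
      · rw [dif_pos hi] at h1
        rw [dif_pos (by omega : 0 < j.val)] at h2
        exact hc ⟨i.val - 1, by have := i.2; omega⟩ ⟨j.val - 1, by have := j.2; omega⟩
          (by simp; omega) ⟨h1, h2⟩
      · rw [dif_neg hi] at h1
        simp at h1
    · intro i j hi hj hcc
      obtain ⟨h1, h2⟩ := hcc
      beta_reduce at h1
      rw [dif_neg (by omega)] at h1
      simp at h1
    · beta_reduce
      rw [dif_neg (by simp)]
  · intro b hb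
    simp only [Finset.mem_coe, Finset.mem_filter, lucasSet, Finset.mem_univ, true_and] at hb
    funext i
    beta_reduce
    by_cases hi : 0 < i.val
    · rw [dif_pos hi]
      congr 1
      apply Fin.ext
      simp
      omega
    · rw [dif_neg hi]
      have : i = 0 := Fin.ext (by simpa using hi)
      rw [this, hb.2]
  · intro c hc
    funext i
    beta_reduce
    rw [dif_pos (by simp : 0 < (i.succ : Fin (m+1)).val)]
    exact congrArg c (Fin.ext (by simp))

lemma lucas_true_card_one :
    ((lucasSet 1).filter fun b => b 0 = true).card = 0 := by
  rw [Finset.card_eq_zero, Finset.eq_empty_iff_forall_notMem]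
  intro b hb
  simp only [Finset.mem_coe, Finset.mem_filter, lucasSet, Finset.mem_univ, true_and] at hb
  exact hb.1.2 0 0 rfl rfl ⟨hb.2, hb.2⟩

lemma lucas_true_card_two :
    ((lucasSet 2).filter fun b => b 0 = true).card = 1 := by
  decide

lemma lucas_true_card (m : ℕ) :
    ((lucasSet (m+3)).filter fun b => b 0 = true).card = (fibSet m).card := by
  classical
  apply Finset.card_nbij'
    (i := fun b => fun i : Fin m => b ((i.succ.succ).castLE (Nat.le_succ (m+2))))
    (j := fun c => fun i : Fin (m+3) =>
      if h : 2 ≤ i.val ∧ i.val ≤ m + 1 then c ⟨i.val - 2, by omega⟩ else decide (i.val = 0))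
  · intro b hb
    simp only [Finset.mem_coe, Finset.mem_filter, lucasSet, fibSet, Finset.mem_univ, true_and] at hb ⊢
    intro i j hj hc
    exact hb.1.1 ((i.succ.succ).castLE (Nat.le_succ (m+2)))
      ((j.succ.succ).castLE (Nat.le_succ (m+2))) (by simp; omega) hc
  · intro c hc
    simp only [Finset.mem_coe, Finset.mem_filter, lucasSet, fibSet, Finset.mem_univ, true_and] at hc ⊢
    refine ⟨⟨?_, ?_⟩, ?_⟩
    · intro i j hj hcc
      obtain ⟨h1, h2⟩ := hcc
      beta_reduce at h1 h2
      by_cases hi2 : 2 ≤ i.val ∧ i.val ≤ m + 1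
      · by_cases hj2 : 2 ≤ j.val ∧ j.val ≤ m + 1
        · rw [dif_pos hi2] at h1; rw [dif_pos hj2] at h2
          exact hc ⟨i.val - 2, by omega⟩ ⟨j.val - 2, by omega⟩ (by simp; omega) ⟨h1, h2⟩
        · rw [dif_neg hj2] at h2
          have : (j : ℕ) = 0 := by simpa using h2
          omega
      · rw [dif_neg hi2] at h1
        have hi0 : (i : ℕ) = 0 := by simpa using h1
        -- then j.val = 1, value at j is false
        rw [dif_neg (by omega)] at h2
        have : (j : ℕ) = 0 := by simpa using h2
        omega
    · intro i j hi hj hcc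
      obtain ⟨h1, h2⟩ := hcc
      beta_reduce at h2
      have hjv : (j : ℕ) = m + 2 := by simpa using hj
      rw [dif_neg (by omega)] at h2
      have : (j : ℕ) = 0 := by simpa using h2
      omega
    · beta_reduce
      rw [dif_neg (by simp)]
      simp
  · intro b hb
    simp only [Finset.mem_coe, Finset.mem_filter, lucasSet, Finset.mem_univ, true_and] at hb
    funext i
    beta_reduce
    by_cases hi2 : 2 ≤ i.val ∧ i.val ≤ m + 1
    · rw [dif_pos hi2]
      congr 1
      apply Fin.ext
      simp
      omega
    · rw [dif_neg hi2]
      rcases Nat.lt_or_ge i.val 2 with hlt | hge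
      · rcases Nat.lt_or_ge i.val 1 with h0 | h1
        · have : i = 0 := Fin.ext (by simpa using h0)
          rw [this, hb.2]
          simp
        · -- i.val = 1 : b 1 = false from fib pair (0,1)
          have hiv : (i : ℕ) = 1 := by omega
          have hnb := hb.1.1 0 i (by simp [hiv])
          have : b i = false := by
            cases hbi : b i
            · rfl
            · exact absurd ⟨hb.2, hbi⟩ hnb
          rw [this]
          simp [hiv]
      · -- i.val = m + 2 : b i = false from wrap
        have hiv : (i : ℕ) = m + 2 := by have := i.2; omega
        have hnb := hb.1.2 0 i (by simp) (by simp [hiv])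
        have : b i = false := by
          cases hbi : b i
          · rfl
          · exact absurd ⟨hb.2, hbi⟩ hnb
        rw [this]
        simp [hiv]
  · intro c hc
    funext i
    beta_reduce
    rw [dif_pos (by simp)]
    exact congrArg c (Fin.ext (by simp only [Fin.coe_castLE, Fin.val_succ]; omega))

lemma sym2_double {α : Type*} [DecidableEq α] (s : Finset α)
    (f : α → α → ℕ) (hsymm : ∀ u v, f u v = f v u) (hdiag : ∀ u, f u u = 0) :
    (∑ p ∈ s.sym2, Sym2.lift ⟨f, hsymm⟩ p) * 2 = ∑ u ∈ s, ∑ v ∈ s, f u v := by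
  induction s using Finset.cons_induction with
  | empty => simp
  | cons a s ha ih =>
    rw [Finset.sym2_cons, Finset.sum_disjUnion, Finset.sum_map]
    simp only [Sym2.mkEmbedding_apply, Function.Embedding.coeFn_mk, Sym2.lift_mk,
      Finset.sum_cons, hdiag, zero_add, add_mul, ih]
    have h2 : ∀ u ∈ s, f u a + ∑ v ∈ s, f u v = f a u + ∑ v ∈ s, f u v := by
      intro u _; rw [hsymm u a]
    rw [Finset.sum_congr rfl h2, Finset.sum_add_distrib]
    ring

lemma lucas_cT (n : ℕ) (hn : 1 ≤ n) (i : Fin n) :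
    ((lucasSet n).filter fun b => b i = true).card = Nat.fib (n - 1) := by
  haveI : NeZero n := ⟨by omega⟩
  rw [lucas_count_rot i]
  match n, hn with
  | 1, _ => exact lucas_true_card_one
  | 2, _ => exact lucas_true_card_two
  | (m+3), _ =>
    rw [lucas_true_card m, fibSet_card m]
    rfl

lemma lucas_cF (n : ℕ) (hn : 1 ≤ n) (i : Fin n) :
    ((lucasSet n).filter fun b => b i = false).card = Nat.fib (n + 1) := by
  haveI : NeZero n := ⟨by omega⟩
  classical
  have hF0 : ((lucasSet n).filter fun b => b (0 : Fin n) = false).card = Nat.fib (n + 1) := by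
    obtain ⟨m, rfl⟩ : ∃ m, n = m + 1 := ⟨n - 1, by omega⟩
    rw [lucas_false_card m, fibSet_card m]
  have hpart : ∀ j : Fin n, ((lucasSet n).filter fun b => b j = true).card
      + ((lucasSet n).filter fun b => b j = false).card = (lucasSet n).card := by
    intro j
    have h := Finset.card_filter_add_card_filter_not
      (s := lucasSet n) (p := fun b => b j = true)
    have hcong : ((lucasSet n).filter fun b => ¬(b j = true))
        = ((lucasSet n).filter fun b => b j = false) := by
      apply Finset.filter_congr
      intro b _
      simp
    rw [hcong] at h
    exact h
  have h1 := hpart i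
  have h2 := hpart 0
  rw [lucas_cT n hn i] at h1
  rw [lucas_cT n hn 0, hF0] at h2
  exact (Nat.add_left_cancel (h2.trans h1.symm)).symm

theorem wienerIndex_lucasCube' (n : ℕ) (hn : 1 ≤ n) :
    wienerIndex (lucasCube n) = n * Nat.fib (n - 1) * Nat.fib (n + 1) := by
  haveI : NeZero n := ⟨by omega⟩
  classical
  have hW : wienerIndex (lucasCube n)
      = ∑ p ∈ (Finset.univ : Finset {b : Fin n → Bool // lucasWord n b}).sym2,
        Sym2.lift ⟨fun u v => hammingDist u.val v.val, fun _ _ => hammingDist_comm _ _⟩ p := by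
    unfold wienerIndex
    apply Finset.sum_congr rfl
    intro p _
    refine Sym2.inductionOn p ?_
    intro u v
    simp only [Sym2.lift_mk]
    exact lucas_dist u v
  have hdouble := sym2_double (Finset.univ : Finset {b : Fin n → Bool // lucasWord n b})
    (fun u v => hammingDist u.val v.val) (fun _ _ => hammingDist_comm _ _)
    (fun u => by simp)
  rw [← hW] at hdouble
  have hsub : (∑ u : {b : Fin n → Bool // lucasWord n b},
        ∑ v : {b : Fin n → Bool // lucasWord n b}, hammingDist u.val v.val)
      = ∑ u ∈ lucasSet n, ∑ v ∈ lucasSet n, hammingDist u v := by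
    have hmem : ∀ b, b ∈ lucasSet n ↔ lucasWord n b := by intro b; simp [lucasSet]
    symm
    rw [Finset.sum_subtype (lucasSet n) hmem
      (fun u => ∑ v ∈ lucasSet n, hammingDist u v)]
    apply Finset.sum_congr rfl
    intro u _
    exact Finset.sum_subtype (lucasSet n) hmem (fun v => hammingDist u.val v)
  have hcoord : (∑ u ∈ lucasSet n, ∑ v ∈ lucasSet n, hammingDist u v)
      = 2 * (n * Nat.fib (n - 1) * Nat.fib (n + 1)) := by
    have hham : ∀ u v : Fin n → Bool,
        hammingDist u v = ∑ i : Fin n, (if u i ≠ v i then 1 else 0) := by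
      intro u v
      exact Finset.card_filter _ _
    calc (∑ u ∈ lucasSet n, ∑ v ∈ lucasSet n, hammingDist u v)
        = ∑ u ∈ lucasSet n, ∑ i : Fin n, ∑ v ∈ lucasSet n, (if u i ≠ v i then 1 else 0) := by
          apply Finset.sum_congr rfl; intro u _
          rw [Finset.sum_comm]
          apply Finset.sum_congr rfl; intro v _
          exact hham u v
      _ = ∑ i : Fin n, ∑ u ∈ lucasSet n, ∑ v ∈ lucasSet n, (if u i ≠ v i then 1 else 0) :=
          Finset.sum_comm
      _ = 2 * (n * Nat.fib (n - 1) * Nat.fib (n + 1)) := by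
          have hinner : ∀ i : Fin n, ∀ u : Fin n → Bool,
              (∑ v ∈ lucasSet n, (if u i ≠ v i then 1 else 0))
                = if u i = true then Nat.fib (n+1) else Nat.fib (n-1) := by
            intro i u
            rw [← Finset.card_filter]
            cases hu : u i
            · simp only [if_neg (by simp : ¬(false = true))]
              rw [← lucas_cT n hn i]
              apply congrArg
              apply Finset.filter_congr
              intro b _
              cases b i <;> simp
            · simp only [if_pos rfl]
              rw [← lucas_cF n hn i]
              apply congrArg
              apply Finset.filter_congr
              intro b _
              cases b i <;> simp
          have houter : ∀ i : Fin n,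
              (∑ u ∈ lucasSet n, ∑ v ∈ lucasSet n, (if u i ≠ v i then 1 else 0))
                = 2 * (Nat.fib (n-1) * Nat.fib (n+1)) := by
            intro i
            calc (∑ u ∈ lucasSet n, ∑ v ∈ lucasSet n, (if u i ≠ v i then 1 else 0))
                = ∑ u ∈ lucasSet n, (if u i = true then Nat.fib (n+1) else Nat.fib (n-1)) :=
                  Finset.sum_congr rfl (fun u _ => hinner i u)
              _ = 2 * (Nat.fib (n-1) * Nat.fib (n+1)) := by
                  rw [Finset.sum_ite, Finset.sum_const, Finset.sum_const, smul_eq_mul,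
                    smul_eq_mul, lucas_cT n hn i]
                  have hcong : ((lucasSet n).filter fun u => ¬(u i = true))
                      = ((lucasSet n).filter fun u => u i = false) := by
                    apply Finset.filter_congr; intro b _; simp
                  rw [hcong, lucas_cF n hn i]
                  ring
          rw [Finset.sum_congr rfl (fun i _ => houter i), Finset.sum_const, Finset.card_univ,
            Fintype.card_fin, smul_eq_mul]
          ring
  rw [hsub, hcoord] at hdouble
  have h2 : wienerIndex (lucasCube n) * 2 = (n * Nat.fib (n - 1) * Nat.fib (n + 1)) * 2 := by
    rw [hdouble, Nat.mul_comm]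
  exact Nat.eq_of_mul_eq_mul_right (show 0 < 2 by norm_num) h2

/-- For any `n ≥ 1`, the Wiener index of the Lucas cube satisfies
`W(Λ_n) = n·F_{n−1}·F_{n+1}`. -/
theorem wienerIndex_lucasCube (n : ℕ) (hn : 1 ≤ n) :
    wienerIndex (lucasCube n) = n * Nat.fib (n - 1) * Nat.fib (n + 1) :=
  wienerIndex_lucasCube' n hn
end
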